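/- arXiv:2205.11309 — 2 statements merged into one kernel-verified Lean document; each statement's English description precedes it below -/
import Mathlib

section
/- Let x ∈ E be good and let y ∈ E. Set A = E(x,x) and A̲ = C(x,x). If x is rigid in C and Σ²x ≅ x, then Tor₂^A(C(x,y), ₐA̲) ≅ 0, where C(x,y) is a right A-module and A̲ is a left A-module. -/
/-!
Shared framework: a `k`-linear Frobenius category `E` with projective objects `add r`,
its stable category `C = E̲` (realized as the category `SC` below), triangulated-structure
data on `C` (`TriData`), 2-Calabi–Yau via a Serre-duality pairing, rigid/maximal rigid
objects, and module structures over (stable) endomorphism rings.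
-/

namespace Paper

open CategoryTheory Limits

universe v u

variable (E : Type u) [Category.{v} E] [Preadditive E] [HasFiniteBiproducts E] [HasBinaryBiproducts E]

/-- An exact structure (in the sense of Quillen) on an additive category:
a distinguished class of kernel–cokernel pairs (`conflations`) satisfying the usual axioms. -/
structure ExactStr where
  /-- `conf i p` says that `x ⟶ᵢ y ⟶ₚ z` is a conflation. -/
  conf : ∀ ⦃x y z : E⦄, (x ⟶ y) → (y ⟶ z) → Prop
  conf_comp : ∀ ⦃x y z : E⦄ {i : x ⟶ y} {p : y ⟶ z}, conf i p → i ≫ p = 0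
  conf_isKernel : ∀ ⦃x y z : E⦄ {i : x ⟶ y} {p : y ⟶ z} (h : conf i p),
    Nonempty (IsLimit (KernelFork.ofι i (conf_comp h)))
  conf_isCokernel : ∀ ⦃x y z : E⦄ {i : x ⟶ y} {p : y ⟶ z} (h : conf i p),
    Nonempty (IsColimit (CokernelCofork.ofπ p (conf_comp h)))
  conf_split : ∀ x y : E, conf (biprod.inl : x ⟶ x ⊞ y) (biprod.snd : x ⊞ y ⟶ y)
  conf_iso : ∀ ⦃x y z x' y' z' : E⦄ {i : x ⟶ y} {p : y ⟶ z}
    (e₁ : x ≅ x') (e₂ : y ≅ y') (e₃ : z ≅ z'), conf i p →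
    conf (e₁.inv ≫ i ≫ e₂.hom) (e₂.inv ≫ p ≫ e₃.hom)
  defl_comp : ∀ ⦃x y z w v : E⦄ {i : x ⟶ y} {p : y ⟶ z} {j : v ⟶ z} {p' : z ⟶ w},
    conf i p → conf j p' → ∃ (u : E) (i'' : u ⟶ y), conf i'' (p ≫ p')
  infl_comp : ∀ ⦃x y z w v : E⦄ {i : x ⟶ y} {p : y ⟶ v} {i' : y ⟶ z} {p' : z ⟶ w},
    conf i p → conf i' p' → ∃ (u : E) (q : z ⟶ u), conf (i ≫ i') q
  conf_pullback : ∀ ⦃x y z : E⦄ {i : x ⟶ y} {p : y ⟶ z}, conf i p →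
    ∀ ⦃z' : E⦄ (f : z' ⟶ z), ∃ (y' : E) (f' : y' ⟶ y) (p' : y' ⟶ z') (i' : x ⟶ y'),
      conf i' p' ∧ IsPullback f' p' p f
  conf_pushout : ∀ ⦃x y z : E⦄ {i : x ⟶ y} {p : y ⟶ z}, conf i p →
    ∀ ⦃x' : E⦄ (f : x ⟶ x'), ∃ (y' : E) (f' : y ⟶ y') (i' : x' ⟶ y') (p' : y' ⟶ z),
      conf i' p' ∧ IsPushout f i i' f'

variable {E}

namespace ExactStr

variable (S : ExactStr E)

/-- `p` is a deflation (admissible epimorphism). -/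
def IsDeflation {y z : E} (p : y ⟶ z) : Prop := ∃ (x : E) (i : x ⟶ y), S.conf i p

/-- `i` is an inflation (admissible monomorphism). -/
def IsInflation {x y : E} (i : x ⟶ y) : Prop := ∃ (z : E) (p : y ⟶ z), S.conf i p

/-- Projective object relative to the exact structure. -/
def IsProj (P : E) : Prop :=
  ∀ ⦃y z : E⦄ (p : y ⟶ z), S.IsDeflation p → ∀ f : P ⟶ z, ∃ g : P ⟶ y, g ≫ p = f

/-- Injective object relative to the exact structure. -/
def IsInj (I : E) : Prop :=
  ∀ ⦃x y : E⦄ (i : x ⟶ y), S.IsInflation i → ∀ f : x ⟶ I, ∃ g : y ⟶ I, i ≫ g = f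

end ExactStr

/-- `y ∈ add x`: `y` is a direct summand of a finite direct sum of copies of `x`. -/
def InAdd (x y : E) : Prop :=
  ∃ (n : ℕ) (s : y ⟶ ⨁ (fun _ : Fin n => x)) (t : (⨁ fun _ : Fin n => x) ⟶ y), s ≫ t = 𝟙 y

variable (E) in
/-- A Frobenius exact category with projectives `= add r`:
enough projectives and injectives, projectives and injectives coincide,
and the projective objects are exactly the objects of `add r`. -/
structure Frobenius extends ExactStr E where
  enough_proj : ∀ x : E, ∃ (P : E) (p : P ⟶ x), toExactStr.IsProj P ∧ toExactStr.IsDeflation p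
  enough_inj : ∀ x : E, ∃ (I : E) (i : x ⟶ I), toExactStr.IsInj I ∧ toExactStr.IsInflation i
  proj_iff_inj : ∀ P : E, toExactStr.IsProj P ↔ toExactStr.IsInj P
  /-- the projective generator -/
  r : E
  proj_iff_add : ∀ P : E, toExactStr.IsProj P ↔ InAdd r P

namespace Frobenius

variable (k : Type) [Field k] [CategoryTheory.Linear k E]

variable (S : Frobenius E)

/-- An object of `E` is *good* if it is isomorphic in `E` to `x' ⊕ r` for some `x'`. -/
def Good (x : E) : Prop := ∃ x' : E, Nonempty (x ≅ x' ⊞ S.r)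

/-- The `k`-submodule of `x ⟶ y` of morphisms factoring through a projective object. -/
def projIdeal (x y : E) : Submodule k (x ⟶ y) :=
  Submodule.span k {f | ∃ (P : E) (g : x ⟶ P) (h : P ⟶ y), S.IsProj P ∧ f = g ≫ h}

lemma leftComp_projIdeal {x y z : E} (f : x ⟶ y) {g : y ⟶ z}
    (hg : g ∈ S.projIdeal k y z) : f ≫ g ∈ S.projIdeal k x z := by
  have : S.projIdeal k y z ≤ (S.projIdeal k x z).comap (Linear.leftComp k z f) := by
    rw [projIdeal, Submodule.span_le]
    rintro u ⟨P, a, b, hP, rfl⟩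
    exact Submodule.subset_span ⟨P, f ≫ a, b, hP, by simp [Linear.leftComp]⟩
  exact this hg

lemma rightComp_projIdeal {x y z : E} {f : x ⟶ y} (hf : f ∈ S.projIdeal k x y)
    (g : y ⟶ z) : f ≫ g ∈ S.projIdeal k x z := by
  have : S.projIdeal k x y ≤ (S.projIdeal k x z).comap (Linear.rightComp k x g) := by
    rw [projIdeal, Submodule.span_le]
    rintro u ⟨P, a, b, hP, rfl⟩
    exact Submodule.subset_span ⟨P, a, b ≫ g, hP, by simp [Linear.rightComp]⟩
  exact this hf

/-- Hom-spaces of the stable category `C = E̲`. -/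
def SHom (x y : E) : Type _ := (x ⟶ y) ⧸ S.projIdeal k x y

instance (x y : E) : AddCommGroup (S.SHom k x y) :=
  inferInstanceAs (AddCommGroup ((x ⟶ y) ⧸ S.projIdeal k x y))

instance (x y : E) : Module k (S.SHom k x y) :=
  inferInstanceAs (Module k ((x ⟶ y) ⧸ S.projIdeal k x y))

/-- Class of a morphism of `E` in the stable category. -/
def toS {x y : E} (f : x ⟶ y) : S.SHom k x y := Submodule.Quotient.mk f

lemma toS_surjective (x y : E) : Function.Surjective (S.toS k (x := x) (y := y)) :=
  Submodule.Quotient.mk_surjective _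

end Frobenius

/-- The stable category `C = E̲` of the Frobenius category `E`:
same objects, morphisms modulo those factoring through a projective object. -/
def SC (_S : Frobenius E) (k : Type) [Field k] [CategoryTheory.Linear k E] : Type u := E

namespace SC

variable {S : Frobenius E} {k : Type} [Field k] [CategoryTheory.Linear k E]

/-- The canonical identification of objects of `E` with objects of the stable category. -/
abbrev of (S : Frobenius E) (k : Type) [Field k] [CategoryTheory.Linear k E] (x : E) :
    SC S k := x

/-- The object of `E` underlying an object of the stable category. -/
abbrev un (x : SC S k) : E := x

instance : Category (SC S k) where
  Hom x y := S.SHom k x.un y.un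
  id x := S.toS k (𝟙 x.un)
  comp {x y z} f g := by
    refine Quotient.liftOn₂ f g (fun f g => S.toS k (f ≫ g)) ?_
    intro a₁ b₁ a₂ b₂ h₁ h₂
    have h₁' : a₁ - a₂ ∈ S.projIdeal k x.un y.un :=
      (Submodule.Quotient.eq _).mp (Quotient.sound h₁)
    have h₂' : b₁ - b₂ ∈ S.projIdeal k y.un z.un :=
      (Submodule.Quotient.eq _).mp (Quotient.sound h₂)
    show S.toS k (a₁ ≫ b₁) = S.toS k (a₂ ≫ b₂)
    unfold Frobenius.toS
    refine (Submodule.Quotient.eq _).mpr ?_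
    have h : a₁ ≫ b₁ - a₂ ≫ b₂ = a₁ ≫ (b₁ - b₂) + (a₁ - a₂) ≫ b₂ := by
      simp only [Preadditive.comp_sub, Preadditive.sub_comp]; abel
    rw [h]
    exact add_mem (S.leftComp_projIdeal k _ h₂') (S.rightComp_projIdeal k h₁' _)
  id_comp {x y} f := by
    obtain ⟨f, rfl⟩ := S.toS_surjective k _ _ f
    show S.toS k (𝟙 _ ≫ f) = S.toS k f
    rw [Category.id_comp]
  comp_id {x y} f := by
    obtain ⟨f, rfl⟩ := S.toS_surjective k _ _ f
    show S.toS k (f ≫ 𝟙 _) = S.toS k f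
    rw [Category.comp_id]
  assoc {w x y z} f g h := by
    obtain ⟨f, rfl⟩ := S.toS_surjective k _ _ f
    obtain ⟨g, rfl⟩ := S.toS_surjective k _ _ g
    obtain ⟨h, rfl⟩ := S.toS_surjective k _ _ h
    show S.toS k ((f ≫ g) ≫ h) = S.toS k (f ≫ (g ≫ h))
    rw [Category.assoc]

/-- The canonical functor map on morphisms: the class in the stable category of a
morphism of `E`, seen as a morphism of `SC S k`. -/
def toSC (S : Frobenius E) (k : Type) [Field k] [CategoryTheory.Linear k E]
    {x y : E} (f : x ⟶ y) : SC.of S k x ⟶ SC.of S k y := S.toS k f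

lemma toSC_comp {x y z : E} (f : x ⟶ y) (g : y ⟶ z) :
    toSC S k f ≫ toSC S k g = toSC S k (f ≫ g) := rfl

lemma toSC_surjective (x y : E) :
    Function.Surjective (toSC S k (x := x) (y := y)) :=
  Submodule.Quotient.mk_surjective _

instance : Preadditive (SC S k) where
  homGroup x y := inferInstanceAs (AddCommGroup (S.SHom k x.un y.un))
  add_comp x y z f f' g := by
    obtain ⟨f, rfl⟩ := S.toS_surjective k _ _ f
    obtain ⟨f', rfl⟩ := S.toS_surjective k _ _ f'
    obtain ⟨g, rfl⟩ := S.toS_surjective k _ _ g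
    show S.toS k ((f + f') ≫ g) = S.toS k (f ≫ g) + S.toS k (f' ≫ g)
    rw [Preadditive.add_comp]; rfl
  comp_add x y z f g g' := by
    obtain ⟨f, rfl⟩ := S.toS_surjective k _ _ f
    obtain ⟨g, rfl⟩ := S.toS_surjective k _ _ g
    obtain ⟨g', rfl⟩ := S.toS_surjective k _ _ g'
    show S.toS k (f ≫ (g + g')) = S.toS k (f ≫ g) + S.toS k (f ≫ g')
    rw [Preadditive.comp_add]; rfl

instance : CategoryTheory.Linear k (SC S k) where
  homModule x y := inferInstanceAs (Module k (S.SHom k x.un y.un))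
  smul_comp x y z r f g := by
    obtain ⟨f, rfl⟩ := S.toS_surjective k _ _ f
    obtain ⟨g, rfl⟩ := S.toS_surjective k _ _ g
    show S.toS k ((r • f) ≫ g) = r • S.toS k (f ≫ g)
    rw [Linear.smul_comp]; rfl
  comp_smul x y z f r g := by
    obtain ⟨f, rfl⟩ := S.toS_surjective k _ _ f
    obtain ⟨g, rfl⟩ := S.toS_surjective k _ _ g
    show S.toS k (f ≫ (r • g)) = r • S.toS k (f ≫ g)
    rw [Linear.comp_smul]; rfl

end SC

end Paper

section EndModules

namespace Paper

open CategoryTheory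

/-- In any preadditive category, `x ⟶ y` is a right module over `End x`
(i.e. a left module over `(End x)ᵐᵒᵖ`), acting by precomposition. -/
instance moduleEndLeftOp {C : Type*} [Category C] [Preadditive C] {x y : C} :
    Module (End x)ᵐᵒᵖ (x ⟶ y) where
  smul a f := a.unop ≫ f
  one_smul f := Category.id_comp f
  mul_smul a b f := by
    show (MulOpposite.unop a ≫ MulOpposite.unop b) ≫ f =
      MulOpposite.unop a ≫ MulOpposite.unop b ≫ f
    rw [Category.assoc]
  smul_zero a := Limits.comp_zero
  smul_add a f g := Preadditive.comp_add _ _ _ _ _ _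
  add_smul a b f := Preadditive.add_comp _ _ _ _ _ _
  zero_smul f := Limits.zero_comp

lemma op_smul_def {C : Type*} [Category C] [Preadditive C] {x y : C}
    (a : (End x)ᵐᵒᵖ) (f : x ⟶ y) : a • f = a.unop ≫ f := rfl

lemma end_smul_def {C : Type*} [Category C] [Preadditive C] {x y : C}
    (a : End y) (f : x ⟶ y) : a • f = f ≫ a := rfl

/-- Postcomposition as a map of right `End x`-modules. -/
def postcompL {C : Type*} [Category C] [Preadditive C] {x y z : C} (f : y ⟶ z) :
    (x ⟶ y) →ₗ[(End x)ᵐᵒᵖ] (x ⟶ z) where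
  toFun g := g ≫ f
  map_add' g g' := Preadditive.add_comp _ _ _ _ _ _
  map_smul' a g := by
    show (a.unop ≫ g) ≫ f = a.unop ≫ g ≫ f
    rw [Category.assoc]

/-- Precomposition as a map of left `End z`-modules. -/
def precompL {C : Type*} [Category C] [Preadditive C] {x y z : C} (f : x ⟶ y) :
    (y ⟶ z) →ₗ[End z] (x ⟶ z) where
  toFun g := f ≫ g
  map_add' g g' := Preadditive.comp_add _ _ _ _ _ _
  map_smul' a g := by
    show f ≫ g ≫ a = (f ≫ g) ≫ a
    rw [Category.assoc]

end Paper

end EndModules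

namespace Paper

open CategoryTheory Limits

section Tri

variable {E : Type u} [Category.{v} E] [Preadditive E] [HasFiniteBiproducts E]
  [HasBinaryBiproducts E]

/-- The data and axioms of the triangulated structure on the stable category `C = SC S k`
of the Frobenius category `E` (suspension `Σ`, distinguished triangles), together with the
assumptions that `C` is 2-Calabi–Yau (formulated via a nondegenerate associative Serre
pairing `C(x,y) × C(y,Σ²x) → k`, functorial in both variables), Hom-finite over `k`, and
has split idempotents. -/
structure TriData (S : Frobenius E) (k : Type) [Field k] [CategoryTheory.Linear k E] where
  /-- the suspension functor -/
  susp : SC S k ⥤ SC S k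
  equiv : susp.IsEquivalence
  additive : susp.Additive
  linear : Functor.Linear k susp
  /-- distinguished triangles `x ⟶ y ⟶ z ⟶ Σ x` -/
  dtri : ∀ ⦃x y z : SC S k⦄, (x ⟶ y) → (y ⟶ z) → (z ⟶ susp.obj x) → Prop
  dtri_comp_zero : ∀ ⦃x y z : SC S k⦄ {f : x ⟶ y} {g : y ⟶ z} {h : z ⟶ susp.obj x},
    dtri f g h → f ≫ g = 0
  dtri_rot : ∀ ⦃x y z : SC S k⦄ {f : x ⟶ y} {g : y ⟶ z} {h : z ⟶ susp.obj x},
    dtri f g h → dtri g h (-(susp.map f))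
  dtri_complete : ∀ ⦃x y : SC S k⦄ (f : x ⟶ y),
    ∃ (z : SC S k) (g : y ⟶ z) (h : z ⟶ susp.obj x), dtri f g h
  dtri_ext : ∀ ⦃x y z x' y' z' : SC S k⦄
    {f : x ⟶ y} {g : y ⟶ z} {h : z ⟶ susp.obj x}
    {f' : x' ⟶ y'} {g' : y' ⟶ z'} {h' : z' ⟶ susp.obj x'},
    dtri f g h → dtri f' g' h' → ∀ (a : x ⟶ x') (b : y ⟶ y'), f ≫ b = a ≫ f' →
      ∃ c : z ⟶ z', g ≫ c = b ≫ g' ∧ h ≫ susp.map a = c ≫ h'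
  /-- conflations of `E` induce distinguished triangles in the stable category -/
  conf_dtri : ∀ ⦃x y z : E⦄ {i : x ⟶ y} {p : y ⟶ z}, S.conf i p →
    ∃ h : SC.of S k z ⟶ susp.obj (SC.of S k x), dtri (SC.toSC S k i) (SC.toSC S k p) h
  /-- the 2-Calabi–Yau (Serre duality) pairing `C(x,y) ⊗ C(y,Σ²x) → k` -/
  pair : ∀ (x y : SC S k), (x ⟶ y) →ₗ[k] (y ⟶ susp.obj (susp.obj x)) →ₗ[k] k
  pair_assoc : ∀ ⦃x y z : SC S k⦄ (f : x ⟶ y) (g : y ⟶ z)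
    (h : z ⟶ susp.obj (susp.obj x)), pair x z (f ≫ g) h = pair x y f (g ≫ h)
  pair_nondeg_left : ∀ ⦃x y : SC S k⦄ (f : x ⟶ y), (∀ g, pair x y f g = 0) → f = 0
  pair_nondeg_right : ∀ ⦃x y : SC S k⦄ (g : y ⟶ susp.obj (susp.obj x)),
    (∀ f, pair x y f g = 0) → g = 0
  /-- `C` is Hom-finite -/
  homFinite : ∀ x y : SC S k, FiniteDimensional k (x ⟶ y)
  /-- `C` has split idempotents -/
  idem : IsIdempotentComplete (SC S k)

namespace TriData

variable {k : Type} [Field k] [CategoryTheory.Linear k E] {S : Frobenius E}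
variable (T : TriData S k)

/-- `x` is rigid: `C(x, Σx) = 0`. -/
def Rigid (x : SC S k) : Prop := ∀ f : x ⟶ T.susp.obj x, f = 0

/-- `y ∈ add x` in the stable category. -/
def AddSummand (_T : TriData S k) (x y : SC S k) : Prop :=
  ∃ (n : ℕ) (s : y ⟶ SC.of S k (⨁ fun _ : Fin n => x.un))
    (t : SC.of S k (⨁ fun _ : Fin n => x.un) ⟶ y), s ≫ t = 𝟙 y

/-- `x` is maximal rigid: it is rigid and `C(x ⊕ y, Σ(x ⊕ y)) = 0` implies `y ∈ add x`
(formulated componentwise). -/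
def MaxRigid (x : SC S k) : Prop :=
  T.Rigid x ∧ ∀ y : SC S k, T.Rigid y → (∀ f : x ⟶ T.susp.obj y, f = 0) →
    (∀ f : y ⟶ T.susp.obj x, f = 0) → T.AddSummand x y

/-- `Σ² x ≅ x` in the stable category. -/
def SuspSqFix (x : SC S k) : Prop := Nonempty (T.susp.obj (T.susp.obj x) ≅ x)

end TriData

end Tri

/-- A ring is self-injective if it is injective as a (left) module over itself. -/
def IsSelfInjectiveRing (A : Type*) [Ring A] : Prop := Module.Injective A A

end Paper

namespace Paper

open CategoryTheory Limits

noncomputable section ATensor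

set_option linter.unusedSectionVars false

variable (k : Type*) [CommRing k]
variable (A : Type*) [Ring A] [Algebra k A]
variable (M : Type*) [AddCommGroup M] [Module k M] [Module Aᵐᵒᵖ M]
variable (N : Type*) [AddCommGroup N] [Module k N] [Module A N]

/-- The relations defining the tensor product `M ⊗_A N` of a right `A`-module and a
left `A`-module over the (possibly noncommutative) `k`-algebra `A`, as a quotient of
`M ⊗_k N`. -/
def atensorRel : Submodule k (TensorProduct k M N) :=
  Submodule.span k {t | ∃ (m : M) (a : A) (n : N),
    t = (MulOpposite.op a • m) ⊗ₜ[k] n - m ⊗ₜ[k] (a • n)}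

/-- The tensor product `M ⊗_A N` of a right `A`-module and a left `A`-module over the
(possibly noncommutative) `k`-algebra `A`. -/
def ATensor : Type _ := TensorProduct k M N ⧸ atensorRel k A M N

instance : AddCommGroup (ATensor k A M N) :=
  inferInstanceAs (AddCommGroup (TensorProduct k M N ⧸ atensorRel k A M N))

instance : Module k (ATensor k A M N) :=
  inferInstanceAs (Module k (TensorProduct k M N ⧸ atensorRel k A M N))

namespace ATensor

/-- The canonical balanced bilinear map `M × N → M ⊗_A N`. -/
def mkBilin : M →ₗ[k] N →ₗ[k] ATensor k A M N :=
  (TensorProduct.mk k M N).compr₂ (atensorRel k A M N).mkQ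

/-- `m ⊗ n` in `M ⊗_A N`. -/
def mk (m : M) (n : N) : ATensor k A M N := mkBilin k A M N m n

variable {k A M N}

lemma mk_smul (m : M) (a : A) (n : N) :
    mk k A M N (MulOpposite.op a • m) n = mk k A M N m (a • n) := by
  unfold mk mkBilin
  show Submodule.Quotient.mk _ = Submodule.Quotient.mk _
  rw [Submodule.Quotient.eq]
  exact Submodule.subset_span ⟨m, a, n, rfl⟩

lemma mk_surjective_span (t : ATensor k A M N) :
    ∃ s : TensorProduct k M N, Submodule.Quotient.mk s = t :=
  Submodule.Quotient.mk_surjective _ t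

variable {P : Type*} [AddCommGroup P] [Module k P]

/-- Lift a balanced `k`-bilinear map to the tensor product `M ⊗_A N`. -/
def lift (φ : M →ₗ[k] N →ₗ[k] P)
    (bal : ∀ (m : M) (a : A) (n : N), φ (MulOpposite.op a • m) n = φ m (a • n)) :
    ATensor k A M N →ₗ[k] P := by
  refine Submodule.liftQ _ (TensorProduct.lift φ) ?_
  rw [atensorRel, Submodule.span_le]
  rintro t ⟨m, a, n, rfl⟩
  simp only [SetLike.mem_coe, LinearMap.mem_ker, map_sub, TensorProduct.lift.tmul]
  rw [bal m a n, sub_self]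

@[simp] lemma lift_mk (φ : M →ₗ[k] N →ₗ[k] P) (bal) (m : M) (n : N) :
    lift φ bal (mk k A M N m n) = φ m n := rfl

lemma hom_ext {f g : ATensor k A M N →ₗ[k] P}
    (h : ∀ m n, f (mk k A M N m n) = g (mk k A M N m n)) : f = g := by
  apply Submodule.linearMap_qext
  apply TensorProduct.ext'
  intro m n
  exact h m n

variable {M' : Type*} [AddCommGroup M'] [Module k M'] [Module Aᵐᵒᵖ M']
variable {N' : Type*} [AddCommGroup N'] [Module k N'] [Module A N']

/-- Functoriality of `M ⊗_A N` in the right `A`-module variable. -/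
def mapLeft (f : M →ₗ[k] M') (hf : ∀ (a : A) (m : M),
    f (MulOpposite.op a • m) = MulOpposite.op a • f m) :
    ATensor k A M N →ₗ[k] ATensor k A M' N :=
  lift ((mkBilin k A M' N).comp f) (by
    intro m a n
    simp only [LinearMap.comp_apply, hf]
    exact mk_smul _ _ _)

/-- Functoriality of `M ⊗_A N` in the left `A`-module variable. -/
def mapRight (g : N →ₗ[k] N') (hg : ∀ (a : A) (n : N), g (a • n) = a • g n) :
    ATensor k A M N →ₗ[k] ATensor k A M N' :=
  lift ((mkBilin k A M N').compl₂ g) (by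
    intro m a n
    simp only [LinearMap.compl₂_apply, hg]
    exact mk_smul _ _ _)

@[simp] lemma mapLeft_mk (f : M →ₗ[k] M') (hf) (m : M) (n : N) :
    mapLeft (N := N) f hf (mk k A M N m n) = mk k A M' N (f m) n := rfl

@[simp] lemma mapRight_mk (g : N →ₗ[k] N') (hg) (m : M) (n : N) :
    mapRight (M := M) g hg (mk k A M N m n) = mk k A M N' m (g n) := rfl

end ATensor

end ATensor

end Paper

namespace Paper

open CategoryTheory Limits

section StableModules

variable {E : Type u} [Category.{v} E] [Preadditive E] [HasFiniteBiproducts E]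
  [HasBinaryBiproducts E]
variable (k : Type) [Field k] [CategoryTheory.Linear k E]
variable (S : Frobenius E)

namespace Frobenius

/-- Precomposition on stable Hom spaces. -/
def preS {x' x y : E} (a : x' ⟶ x) : S.SHom k x y →ₗ[k] S.SHom k x' y :=
  Submodule.mapQ _ _ (Linear.leftComp k y a)
    (fun f hf => S.leftComp_projIdeal k a hf)

/-- Postcomposition on stable Hom spaces. -/
def postS {x y y' : E} (b : y ⟶ y') : S.SHom k x y →ₗ[k] S.SHom k x y' :=
  Submodule.mapQ _ _ (Linear.rightComp k x b)
    (fun f hf => S.rightComp_projIdeal k hf b)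

@[simp] lemma preS_toS {x' x y : E} (a : x' ⟶ x) (f : x ⟶ y) :
    S.preS k a (S.toS k f) = S.toS k (a ≫ f) := rfl

@[simp] lemma postS_toS {x y y' : E} (b : y ⟶ y') (f : x ⟶ y) :
    S.postS k b (S.toS k f) = S.toS k (f ≫ b) := rfl

/-- `C(x,y)` is a right `E(x,x)`-module. -/
instance shomModuleOp (x y : E) : Module (End x)ᵐᵒᵖ (S.SHom k x y) where
  smul a u := S.preS k a.unop u
  one_smul u := by
    obtain ⟨f, rfl⟩ := S.toS_surjective k _ _ u
    show S.toS k ((𝟙 x : End x) ≫ f) = S.toS k f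
    rw [Category.id_comp]
  mul_smul a b u := by
    obtain ⟨f, rfl⟩ := S.toS_surjective k _ _ u
    show S.toS k ((MulOpposite.unop a ≫ MulOpposite.unop b) ≫ f)
      = S.toS k (MulOpposite.unop a ≫ MulOpposite.unop b ≫ f)
    rw [Category.assoc]
  smul_zero a := map_zero _
  smul_add a u v := map_add _ _ _
  add_smul a b u := by
    obtain ⟨f, rfl⟩ := S.toS_surjective k _ _ u
    show S.toS k ((MulOpposite.unop a + MulOpposite.unop b) ≫ f)
      = S.toS k (MulOpposite.unop a ≫ f) + S.toS k (MulOpposite.unop b ≫ f)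
    rw [Preadditive.add_comp]
    rfl
  zero_smul u := by
    obtain ⟨f, rfl⟩ := S.toS_surjective k _ _ u
    show S.toS k ((0 : x ⟶ x) ≫ f) = 0
    rw [Limits.zero_comp]
    rfl

lemma shom_op_smul_def {x y : E} (a : (End x)ᵐᵒᵖ) (u : S.SHom k x y) :
    a • u = S.preS k a.unop u := rfl

/-- `C(x,y)` is a left `E(y,y)`-module (with the `End`-multiplication convention
`a * b = b ≫ a`, so the action is by postcomposition). -/
instance shomModuleEnd (x y : E) : Module (End y) (S.SHom k x y) where
  smul b u := S.postS k b u
  one_smul u := by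
    obtain ⟨f, rfl⟩ := S.toS_surjective k _ _ u
    show S.toS k (f ≫ (𝟙 y : End y)) = S.toS k f
    rw [Category.comp_id]
  mul_smul a b u := by
    obtain ⟨f, rfl⟩ := S.toS_surjective k _ _ u
    show S.toS k (f ≫ (b ≫ a)) = S.toS k ((f ≫ b) ≫ a)
    rw [Category.assoc]
  smul_zero a := map_zero _
  smul_add a u v := map_add _ _ _
  add_smul a b u := by
    obtain ⟨f, rfl⟩ := S.toS_surjective k _ _ u
    show S.toS k (f ≫ (a + b)) = S.toS k (f ≫ a) + S.toS k (f ≫ b)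
    rw [Preadditive.comp_add]
    rfl
  zero_smul u := by
    obtain ⟨f, rfl⟩ := S.toS_surjective k _ _ u
    show S.toS k (f ≫ (0 : y ⟶ y)) = 0
    rw [Limits.comp_zero]
    rfl

lemma shom_end_smul_def {x y : E} (b : End y) (u : S.SHom k x y) :
    b • u = S.postS k b u := rfl

end Frobenius

end StableModules

section TensorFunctor

variable (A : Type v) [Ring A]
variable (M : Type v) [AddCommGroup M] [Module Aᵐᵒᵖ M]

/-- The functor `M ⊗_A — : A-Mod ⥤ Ab` (realized with `ℤ`-coefficients),
for a right `A`-module `M`. -/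
noncomputable def atensorFunctor : ModuleCat.{v} A ⥤ ModuleCat.{v} ℤ where
  obj N := ModuleCat.of ℤ (ATensor ℤ A M N)
  map {N N'} g := ModuleCat.ofHom (ATensor.mapRight (M := M) (g.hom.toAddMonoidHom.toIntLinearMap)
    (fun a n => map_smul g.hom a n))
  map_id N := by
    apply ModuleCat.hom_ext
    apply ATensor.hom_ext
    intro m n
    rfl
  map_comp {N N' N''} g h := by
    apply ModuleCat.hom_ext
    apply ATensor.hom_ext
    intro m n
    rfl

noncomputable instance : (atensorFunctor.{v} A M).Additive where
  map_add := by
    intros N N' g h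
    apply ModuleCat.hom_ext
    apply ATensor.hom_ext
    intro m n
    show ATensor.mk ℤ A M _ m ((g + h).hom n) =
      ATensor.mk ℤ A M _ m (g.hom n) + ATensor.mk ℤ A M _ m (h.hom n)
    rw [ModuleCat.hom_add, LinearMap.add_apply]
    exact map_add (ATensor.mkBilin ℤ A M _ m) _ _

end TensorFunctor

end Paper

set_option linter.unusedSectionVars false

section Aux9

open CategoryTheory Limits Paper

universe v u

variable {E : Type u} [Category.{v} E] [Preadditive E] [HasFiniteBiproducts E]
  [HasBinaryBiproducts E]

/-- Projectivity is inherited by retracts. -/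
lemma aux9_projective_of_retract {C : Type*} [Category C] {P Q : C} (i : P ⟶ Q) (r : Q ⟶ P)
    (h : i ≫ r = 𝟙 P) [CategoryTheory.Projective Q] : CategoryTheory.Projective P where
  factors {A B} f e he := by
    obtain ⟨g, hg⟩ := Projective.factors (r ≫ f) e
    exact ⟨i ≫ g, by rw [Category.assoc, hg, ← Category.assoc, h, Category.id_comp]⟩

/-- The key summation identity: if `w` is a summand of `ρⁿ` and `ρ` is a summand of `x`,
then any `g : w ⟶ x` is a sum of morphisms factoring through `ρ` in a controlled way. -/
lemma aux9_key {x ρ w : E} (ι : ρ ⟶ x) (πr : x ⟶ ρ) (hι : ι ≫ πr = 𝟙 ρ)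
    {n : ℕ} (s : w ⟶ ⨁ (fun _ : Fin n => ρ)) (t : (⨁ fun _ : Fin n => ρ) ⟶ w)
    (hst : s ≫ t = 𝟙 w) (g : w ⟶ x) :
    ∑ i : Fin n, ((s ≫ biproduct.π (fun _ : Fin n => ρ) i) ≫ ι)
      ≫ (πr ≫ (biproduct.ι (fun _ : Fin n => ρ) i ≫ (t ≫ g))) = g := by
  have e1 : ∀ i : Fin n, ((s ≫ biproduct.π (fun _ : Fin n => ρ) i) ≫ ι)
      ≫ (πr ≫ (biproduct.ι (fun _ : Fin n => ρ) i ≫ (t ≫ g)))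
      = s ≫ ((biproduct.π (fun _ : Fin n => ρ) i ≫ biproduct.ι (fun _ : Fin n => ρ) i)
          ≫ (t ≫ g)) := by
    intro i
    simp only [Category.assoc]
    rw [reassoc_of% hι]
  calc ∑ i : Fin n, ((s ≫ biproduct.π (fun _ : Fin n => ρ) i) ≫ ι)
      ≫ (πr ≫ (biproduct.ι (fun _ : Fin n => ρ) i ≫ (t ≫ g)))
      = ∑ i : Fin n, s ≫ ((biproduct.π (fun _ : Fin n => ρ) i
          ≫ biproduct.ι (fun _ : Fin n => ρ) i) ≫ (t ≫ g)) :=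
        Finset.sum_congr rfl (fun i _ => e1 i)
    _ = s ≫ ((∑ i : Fin n, biproduct.π (fun _ : Fin n => ρ) i
          ≫ biproduct.ι (fun _ : Fin n => ρ) i) ≫ (t ≫ g)) := by
        rw [← Preadditive.comp_sum, ← Preadditive.sum_comp]
    _ = g := by
        rw [biproduct.total, Category.id_comp, ← Category.assoc, hst, Category.id_comp]

/-- If `ρ` is a summand of `x` and `w ∈ add ρ`, then the left `End x`-module `w ⟶ x`
is projective. -/
lemma aux9_projective_hom_mod {x ρ w : E} (ι : ρ ⟶ x) (πr : x ⟶ ρ) (hι : ι ≫ πr = 𝟙 ρ)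
    (hw : InAdd ρ w) : CategoryTheory.Projective (ModuleCat.of (End x) (w ⟶ x)) := by
  obtain ⟨n, s, t, hst⟩ := hw
  let A := End x
  let uu : (w ⟶ x) →ₗ[A] (Fin n → A) :=
    { toFun := fun g i => πr ≫ (biproduct.ι (fun _ : Fin n => ρ) i ≫ (t ≫ g))
      map_add' := fun g g' => by
        funext i
        simp [Preadditive.comp_add]
      map_smul' := fun a g => by
        funext i
        show πr ≫ (biproduct.ι (fun _ : Fin n => ρ) i ≫ (t ≫ (g ≫ a)))
          = (πr ≫ (biproduct.ι (fun _ : Fin n => ρ) i ≫ (t ≫ g))) ≫ a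
        simp [Category.assoc] }
  let vv : (Fin n → A) →ₗ[A] (w ⟶ x) :=
    { toFun := fun a => ∑ i : Fin n, ((s ≫ biproduct.π (fun _ : Fin n => ρ) i) ≫ ι) ≫ a i
      map_add' := fun a a' => by
        rw [← Finset.sum_add_distrib]
        refine Finset.sum_congr rfl (fun i _ => ?_)
        show _ ≫ (a i + a' i) = _ ≫ (a i) + _ ≫ (a' i)
        exact Preadditive.comp_add _ _ _ _ _ _
      map_smul' := fun a f => by
        show ∑ i : Fin n, ((s ≫ biproduct.π (fun _ : Fin n => ρ) i) ≫ ι) ≫ (f i ≫ a)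
          = (∑ i : Fin n, ((s ≫ biproduct.π (fun _ : Fin n => ρ) i) ≫ ι) ≫ f i) ≫ a
        rw [Preadditive.sum_comp]
        exact Finset.sum_congr rfl (fun i _ => by simp [Category.assoc]) }
  have huv : ∀ g : w ⟶ x, vv (uu g) = g := fun g => aux9_key ι πr hι s t hst g
  haveI : CategoryTheory.Projective (ModuleCat.of A (Fin n → A)) :=
    (IsProjective.iff_projective _).mp (Module.Projective.of_basis (Pi.basisFun A (Fin n)))
  have hcomp : ModuleCat.ofHom uu ≫ ModuleCat.ofHom vv
      = 𝟙 (ModuleCat.of A (w ⟶ x)) := by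
    ext g
    show vv (uu g) = g
    exact huv g
  exact aux9_projective_of_retract _ _ hcomp

/-- If the idempotent `πr ≫ ι` kills the right module `M`, then `M ⊗_{End x} (w ⟶ x)`
vanishes whenever `w ∈ add ρ`. -/
lemma aux9_atensor_subsingleton {x ρ w : E} (ι : ρ ⟶ x) (πr : x ⟶ ρ) (hι : ι ≫ πr = 𝟙 ρ)
    (hw : InAdd ρ w) (M : Type v) [AddCommGroup M] [Module (End x)ᵐᵒᵖ M]
    (hkill : ∀ m : M, (MulOpposite.op (πr ≫ ι) : (End x)ᵐᵒᵖ) • m = 0) :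
    Subsingleton (ATensor ℤ (End x) M (w ⟶ x)) := by
  obtain ⟨n, s, t, hst⟩ := hw
  have step : ∀ (m : M) (cc : w ⟶ ρ) (aa : End x),
      ATensor.mk ℤ (End x) M (w ⟶ x) m ((cc ≫ ι) ≫ aa) = 0 := by
    intro m cc aa
    have h1 : (cc ≫ ι) ≫ aa = aa • (cc ≫ ι) := rfl
    rw [h1, ← ATensor.mk_smul]
    let ee : End x := πr ≫ ι
    have hb : ee • (cc ≫ ι) = cc ≫ ι := by
      show (cc ≫ ι) ≫ (πr ≫ ι) = cc ≫ ι
      rw [Category.assoc, reassoc_of% hι]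
    rw [← hb, ← ATensor.mk_smul, hkill]
    unfold ATensor.mk
    rw [map_zero, LinearMap.zero_apply]
  have hmk : ∀ (m : M) (g : w ⟶ x), ATensor.mk ℤ (End x) M (w ⟶ x) m g = 0 := by
    intro m g
    conv_lhs => rw [← aux9_key ι πr hι s t hst g]
    rw [show ATensor.mk ℤ (End x) M (w ⟶ x) m
        (∑ i : Fin n, ((s ≫ biproduct.π (fun _ : Fin n => ρ) i) ≫ ι)
          ≫ (πr ≫ (biproduct.ι (fun _ : Fin n => ρ) i ≫ (t ≫ g))))
      = ∑ i : Fin n, ATensor.mk ℤ (End x) M (w ⟶ x) m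
          (((s ≫ biproduct.π (fun _ : Fin n => ρ) i) ≫ ι)
            ≫ (πr ≫ (biproduct.ι (fun _ : Fin n => ρ) i ≫ (t ≫ g)))) from
        map_sum (ATensor.mkBilin ℤ (End x) M (w ⟶ x) m) _ _]
    exact Finset.sum_eq_zero (fun i _ => step m _ _)
  constructor
  intro a b
  have hz : ∀ tt : ATensor ℤ (End x) M (w ⟶ x), tt = 0 := by
    intro tt
    obtain ⟨s', rfl⟩ := ATensor.mk_surjective_span tt
    induction s' using TensorProduct.induction_on with
    | zero => rfl
    | tmul m nn => exact hmk m nn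
    | add p q hp hq =>
        rw [show (Submodule.Quotient.mk (p + q) : ATensor ℤ (End x) M (w ⟶ x))
          = Submodule.Quotient.mk p + Submodule.Quotient.mk q from rfl, hp, hq]
        exact add_zero _
  rw [hz a, hz b]

/-- Anything in the projective ideal extends along an inflation. -/
lemma aux9_factor_through_inflation {k : Type} [Field k] [CategoryTheory.Linear k E]
    (S : Frobenius E) {x w i : E} {ι : w ⟶ i} (hinfl : S.IsInflation ι) {f : w ⟶ x}
    (hf : f ∈ S.projIdeal k w x) : ∃ g : i ⟶ x, ι ≫ g = f := by
  have hle : S.projIdeal k w x ≤ LinearMap.range (Linear.leftComp k x ι) := by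
    rw [Frobenius.projIdeal, Submodule.span_le]
    rintro u ⟨P, a, b, hP, rfl⟩
    obtain ⟨a2, ha2⟩ := ((S.proj_iff_inj P).mp hP) ι hinfl a
    refine ⟨a2 ≫ b, ?_⟩
    show ι ≫ (a2 ≫ b) = a ≫ b
    rw [← Category.assoc, ha2]
  obtain ⟨g, hg⟩ := hle hf
  exact ⟨g, hg⟩

/-- Part 1: if `x` is rigid with `Σ²x ≅ x` and `x ↪ i₀ ↠ z` is a conflation with `i₀`
projective, then every map `z ⟶ x` lies in the projective ideal. -/
lemma aux9_stable_hom_vanish {k : Type} [Field k] [CategoryTheory.Linear k E]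
    {S : Frobenius E} (T : TriData S k)
    {x i₀ z : E} {ι₀ : x ⟶ i₀} {p₀ : i₀ ⟶ z}
    (hi₀ : S.IsProj i₀) (hconf : S.conf ι₀ p₀)
    (hrigid : T.Rigid (SC.of S k x)) (hsq : T.SuspSqFix (SC.of S k x)) :
    ∀ u : z ⟶ x, u ∈ S.projIdeal k z x := by
  haveI := T.equiv.full
  haveI := T.additive
  intro u
  suffices h0 : SC.toSC S k u = 0 by
    exact (Submodule.Quotient.mk_eq_zero _).mp h0
  set v : SC S k := T.susp.obj (SC.of S k x) with hv
  obtain ⟨hh, hT⟩ := T.conf_dtri hconf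
  have hg0 : SC.toSC S k p₀ = 0 := by
    refine (Submodule.Quotient.mk_eq_zero _).mpr ?_
    exact Submodule.subset_span ⟨i₀, 𝟙 i₀, p₀, hi₀, by rw [Category.id_comp]⟩
  have R1 := T.dtri_rot hT
  -- contractible-ish triangle on v := Σ x
  obtain ⟨h₁, hC⟩ := T.conf_dtri (S.conf_split (SC.un v) (SC.un v))
  have C2 := T.dtri_rot (T.dtri_rot hC)
  obtain ⟨θ⟩ := hsq
  obtain ⟨c, hc1, -⟩ := T.dtri_ext R1 C2 0 (-(SC.toSC S k u ≫ θ.inv))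
    (by rw [hg0, Limits.zero_comp, Limits.zero_comp])
  have hc1' : hh ≫ c = (SC.toSC S k u ≫ θ.inv)
      ≫ T.susp.map (SC.toSC S k (biprod.inl : SC.un v ⟶ SC.un v ⊞ SC.un v)) := by
    rw [hc1, Preadditive.neg_comp, Preadditive.comp_neg, neg_neg]
  have hretr : T.susp.map (SC.toSC S k (biprod.inl : SC.un v ⟶ SC.un v ⊞ SC.un v))
      ≫ T.susp.map (SC.toSC S k (biprod.fst : SC.un v ⊞ SC.un v ⟶ SC.un v)) = 𝟙 _ := by
    rw [← T.susp.map_comp, SC.toSC_comp, biprod.inl_fst]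
    have h2 : SC.toSC S k (𝟙 (SC.un v)) = 𝟙 (SC.of S k (SC.un v)) := rfl
    rw [h2, T.susp.map_id]
  have keyχ : hh ≫ (c ≫ T.susp.map
      (SC.toSC S k (biprod.fst : SC.un v ⊞ SC.un v ⟶ SC.un v)))
      = SC.toSC S k u ≫ θ.inv := by
    rw [← Category.assoc, hc1', Category.assoc, hretr, Category.comp_id]
  obtain ⟨χ₀, hχ₀⟩ := T.susp.map_surjective
    (c ≫ T.susp.map (SC.toSC S k (biprod.fst : SC.un v ⊞ SC.un v ⟶ SC.un v)))
  rw [← hχ₀, hrigid χ₀, T.susp.map_zero, Limits.comp_zero] at keyχ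
  calc SC.toSC S k u = (SC.toSC S k u ≫ θ.inv) ≫ θ.hom := by
        rw [Category.assoc, Iso.inv_hom_id, Category.comp_id]
    _ = 0 := by rw [← keyχ, Limits.zero_comp]

end Aux9
set_option maxHeartbeats 1000000

open CategoryTheory Limits Paper in
/-- **Statement 9** (Lemma 2.6).
Let `E` be a `k`-linear Frobenius category (`k` algebraically closed) with projective
objects `add r` and stable category `C` (2-CY, Hom-finite, split idempotents: packaged
in `T`).  Let `x ∈ E` be good, `y ∈ E`, `A = E(x,x)`, `A̲ = C(x,x)`.  If `x` is rigid
in `C` and `Σ²x ≅ x`, then `Tor₂^A(C(x,y), ₐA̲) ≅ 0`, where `Tor₂` is the second left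
derived functor of the tensor product `C(x,y) ⊗_A —` of the right `A`-module `C(x,y)`
with a left `A`-module. -/
theorem statement_9
    (k : Type) [Field k] [IsAlgClosed k]
    (E : Type u) [Category.{v} E] [Preadditive E] [HasFiniteBiproducts E]
    [HasBinaryBiproducts E] [CategoryTheory.Linear k E]
    (S : Frobenius E) (T : TriData S k)
    (x y : E)
    (hgood : S.Good x)
    (hrigid : T.Rigid (SC.of S k x))
    (hsq : T.SuspSqFix (SC.of S k x)) :
    IsZero
      (((atensorFunctor (End x) (S.SHom k x y)).leftDerived 2).obj
        (ModuleCat.of (End x) (S.SHom k x x))) := by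
  classical
  obtain ⟨x'', ⟨exr⟩⟩ := hgood
  -- `r` is a direct summand of `x`
  let ι : S.r ⟶ x := biprod.inr ≫ exr.inv
  let πr : x ⟶ S.r := exr.hom ≫ biprod.snd
  have hιπ : ι ≫ πr = 𝟙 S.r := by
    show (biprod.inr ≫ exr.inv) ≫ (exr.hom ≫ biprod.snd) = 𝟙 S.r
    rw [Category.assoc, Iso.inv_hom_id_assoc, biprod.inr_snd]
  have hrproj : S.IsProj S.r := (S.proj_iff_add S.r).mpr
    ⟨1, biproduct.ι (fun _ : Fin 1 => S.r) 0, biproduct.π (fun _ : Fin 1 => S.r) 0,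
      biproduct.ι_π_self _ 0⟩
  -- injective (= projective) envelopes
  obtain ⟨i₀, ι₀, hi₀inj, hinfl₀⟩ := S.enough_inj x
  obtain ⟨z, p₀, hconf₀⟩ := hinfl₀
  obtain ⟨i₁, ι₁, hi₁inj, hinfl₁⟩ := S.enough_inj z
  have hi₀proj : S.IsProj i₀ := (S.proj_iff_inj i₀).mpr hi₀inj
  have hi₁proj : S.IsProj i₁ := (S.proj_iff_inj i₁).mpr hi₁inj
  have hadd₀ : InAdd S.r i₀ := (S.proj_iff_add i₀).mp hi₀proj
  have hadd₁ : InAdd S.r i₁ := (S.proj_iff_add i₁).mp hi₁proj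
  -- Part 1: every map `z ⟶ x` factors through a projective
  have hzx : ∀ u : z ⟶ x, u ∈ S.projIdeal k z x :=
    aux9_stable_hom_vanish T hi₀proj hconf₀ hrigid hsq
  -- the idempotent `πr ≫ ι` kills the right module `C(x,y)`
  have hkill : ∀ m : S.SHom k x y, (MulOpposite.op (πr ≫ ι) : (End x)ᵐᵒᵖ) • m = 0 := by
    intro m
    obtain ⟨f, rfl⟩ := S.toS_surjective k x y m
    show S.preS k (πr ≫ ι) (S.toS k f) = 0
    rw [S.preS_toS k]
    refine (Submodule.Quotient.mk_eq_zero _).mpr ?_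
    exact Submodule.subset_span ⟨S.r, πr, ι ≫ f, hrproj, Category.assoc πr ι f⟩
  -- the custom projective resolution of `A̲ = C(x,x)`
  let X₀ : ModuleCat (End x) := ModuleCat.of (End x) (End x)
  let X₁ : ModuleCat (End x) := ModuleCat.of (End x) (i₀ ⟶ x)
  let X₂ : ModuleCat (End x) := ModuleCat.of (End x) (i₁ ⟶ x)
  let NA : ModuleCat (End x) := ModuleCat.of (End x) (S.SHom k x x)
  let ε : X₀ ⟶ NA := ModuleCat.ofHom
    { toFun := fun f => S.toS k f
      map_add' := fun f g => map_add (S.projIdeal k x x).mkQ f g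
      map_smul' := fun a f => by
        show S.toS k (a * f) = S.postS k a (S.toS k f)
        rw [End.mul_def, S.postS_toS k] }
  let d₁ : X₁ ⟶ X₀ := ModuleCat.ofHom
    { toFun := fun g => ι₀ ≫ g
      map_add' := fun g g' => Preadditive.comp_add _ _ _ _ _ _
      map_smul' := fun a g => by
        show ι₀ ≫ (g ≫ a) = (ι₀ ≫ g) ≫ a
        rw [Category.assoc] }
  let d₂ : X₂ ⟶ X₁ := ModuleCat.ofHom (Paper.precompL (p₀ ≫ ι₁))
  have w21 : d₂ ≫ d₁ = 0 := by
    ext g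
    show ι₀ ≫ ((p₀ ≫ ι₁) ≫ g) = 0
    rw [show ι₀ ≫ ((p₀ ≫ ι₁) ≫ g) = (ι₀ ≫ p₀) ≫ (ι₁ ≫ g) by simp [Category.assoc],
      S.conf_comp hconf₀, Limits.zero_comp]
  let cx : ChainComplex (ModuleCat (End x)) ℕ :=
    ChainComplex.mk X₀ X₁ X₂ d₁ d₂ w21
      (fun Sc => ⟨Projective.syzygies Sc.f, Projective.d Sc.f,
        by erw [Category.assoc, kernel.condition, Limits.comp_zero]⟩)
  have hdε : d₁ ≫ ε = 0 := by
    ext g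
    show S.toS k (ι₀ ≫ g) = 0
    refine (Submodule.Quotient.mk_eq_zero _).mpr ?_
    exact Submodule.subset_span ⟨i₀, ι₀, g, hi₀proj, rfl⟩
  have hε0 : cx.d 1 0 ≫ ε = 0 := by
    rw [ChainComplex.mk_d_1_0]
    exact hdε
  let π' : cx ⟶ (ChainComplex.single₀ (ModuleCat (End x))).obj NA :=
    (ChainComplex.toSingle₀Equiv cx NA).symm ⟨ε, hε0⟩
  -- exactness at 0 (in the `quasiIso_iff_of_zeros'` form) and at 1
  have hE0 : (ShortComplex.mk d₁ ε hdε).Exact := by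
    refine (ShortComplex.moduleCat_exact_iff _).mpr ?_
    intro f hf
    have hf2 : S.toS k (show x ⟶ x from f) = (0 : S.SHom k x x) := hf
    have hf' : (show x ⟶ x from f) ∈ S.projIdeal k x x :=
      (Submodule.Quotient.mk_eq_zero _).mp hf2
    obtain ⟨g, hg⟩ := aux9_factor_through_inflation S ⟨z, p₀, hconf₀⟩ hf'
    exact ⟨g, hg⟩
  have hE1 : (ShortComplex.mk d₂ d₁ w21).Exact := by
    refine (ShortComplex.moduleCat_exact_iff _).mpr ?_
    intro g hg
    have hg' : ι₀ ≫ (show i₀ ⟶ x from g) = 0 := hg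
    obtain ⟨hcolim⟩ := S.conf_isCokernel hconf₀
    obtain ⟨uℓ, huℓ⟩ := CokernelCofork.IsColimit.desc' hcolim g hg'
    have huℓ' : p₀ ≫ uℓ = g := huℓ
    obtain ⟨vℓ, hvℓ⟩ := aux9_factor_through_inflation S hinfl₁ (hzx uℓ)
    refine ⟨vℓ, ?_⟩
    show (p₀ ≫ ι₁) ≫ vℓ = g
    rw [Category.assoc, hvℓ, huℓ']
  have hqis : QuasiIso π' := by
    refine ⟨fun n => ?_⟩
    cases n with
    | zero =>
      rw [ChainComplex.quasiIsoAt₀_iff, ShortComplex.quasiIso_iff_of_zeros']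
      · have h10 : cx.d 1 0 = d₁ := ChainComplex.mk_d_1_0 X₀ X₁ X₂ d₁ d₂ w21 _
        have hπ0 : π'.f 0 = ε := by
          show ((ChainComplex.toSingle₀Equiv cx NA).symm ⟨ε, hε0⟩).f 0 = ε
          exact ChainComplex.toSingle₀Equiv_symm_apply_f_zero (C := cx) (X := NA) ε hε0
        refine (ShortComplex.exact_and_epi_g_iff_of_iso ?_).2 ⟨hE0, ?_⟩
        · refine ShortComplex.isoMk (Iso.refl _) (Iso.refl _) (Iso.refl _) ?_ ?_
          · dsimp
            simp [h10]
            exact (Category.id_comp _).trans (Category.comp_id _).symm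
          · dsimp
            simp [hπ0]
            exact (Category.id_comp _).trans (Category.comp_id _).symm
        · rw [ModuleCat.epi_iff_surjective]
          exact S.toS_surjective k x x
      all_goals rfl
    | succ n =>
      rw [quasiIsoAt_iff_exactAt' π' (n + 1) (ChainComplex.exactAt_succ_single_obj _ _)]
      cases n with
      | zero =>
        rw [HomologicalComplex.exactAt_iff' _ 2 1 0 (by simp) (by simp)]
        have h21 : cx.d 2 1 = d₂ := ChainComplex.mk_d_2_1 X₀ X₁ X₂ d₁ d₂ w21 _
        have h10 : cx.d 1 0 = d₁ := ChainComplex.mk_d_1_0 X₀ X₁ X₂ d₁ d₂ w21 _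
        refine (ShortComplex.exact_iff_of_iso ?_).2 hE1
        refine ShortComplex.isoMk (Iso.refl _) (Iso.refl _) (Iso.refl _) ?_ ?_
        · dsimp [HomologicalComplex.sc', HomologicalComplex.shortComplexFunctor']
          simp [h21]
          exact (Category.id_comp _).trans (Category.comp_id _).symm
        · dsimp [HomologicalComplex.sc', HomologicalComplex.shortComplexFunctor']
          simp [h10]
          exact (Category.id_comp _).trans (Category.comp_id _).symm
      | succ n =>
        rw [HomologicalComplex.exactAt_iff' _ (n + 1 + 1 + 1) (n + 1 + 1) (n + 1)
          (by simp) (by simp)]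
        dsimp [cx, HomologicalComplex.sc', HomologicalComplex.shortComplexFunctor',
          ChainComplex.mk, ChainComplex.mkAux]
        simp only [ChainComplex.of.d, dif_pos, eqToHom_refl, Category.id_comp]
        dsimp [ChainComplex.mkAux]
        apply CategoryTheory.exact_d_f
  have hproj : ∀ nn : ℕ, CategoryTheory.Projective (cx.X nn) := by
    haveI h0 : CategoryTheory.Projective (ModuleCat.of (End x) (End x)) :=
      (IsProjective.iff_projective _).mp
        (Module.Projective.of_basis (Module.Basis.singleton PUnit.{1} (End x)))
    haveI h1 : CategoryTheory.Projective (ModuleCat.of (End x) (i₀ ⟶ x)) :=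
      aux9_projective_hom_mod ι πr hιπ hadd₀
    haveI h2 : CategoryTheory.Projective (ModuleCat.of (End x) (i₁ ⟶ x)) :=
      aux9_projective_hom_mod ι πr hιπ hadd₁
    intro nn
    obtain _ | _ | _ | nn := nn
    · exact h0
    · exact h1
    · exact h2
    · dsimp [cx, ChainComplex.mk, ChainComplex.mkAux]
      infer_instance
  let P : ProjectiveResolution NA :=
    { complex := cx
      projective := hproj
      π := π'
      quasiIso := hqis }
  -- the mapped complex vanishes in degree 2
  have hsub : Subsingleton (ATensor ℤ (End x) (S.SHom k x y) (i₁ ⟶ x)) :=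
    aux9_atensor_subsingleton ι πr hιπ hadd₁ (S.SHom k x y) hkill
  have hx2 : IsZero
      ((((atensorFunctor (End x) (S.SHom k x y)).mapHomologicalComplex
        (ComplexShape.down ℕ)).obj cx).X 2) := by
    have h : IsZero (ModuleCat.of ℤ (ATensor ℤ (End x) (S.SHom k x y) (i₁ ⟶ x))) :=
      @ModuleCat.isZero_of_subsingleton ℤ _
        (ModuleCat.of ℤ (ATensor ℤ (End x) (S.SHom k x y) (i₁ ⟶ x))) hsub
    exact h
  have hex : ((((atensorFunctor (End x) (S.SHom k x y)).mapHomologicalComplex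
      (ComplexShape.down ℕ)).obj cx)).ExactAt 2 := by
    rw [HomologicalComplex.exactAt_iff]
    exact ShortComplex.exact_of_isZero_X₂ _ hx2
  have hzero : IsZero (((((atensorFunctor (End x) (S.SHom k x y)).mapHomologicalComplex
      (ComplexShape.down ℕ)).obj cx)).homology 2) :=
    (HomologicalComplex.exactAt_iff_isZero_homology _ _).mp hex
  exact hzero.of_iso (P.isoLeftDerivedObj (atensorFunctor (End x) (S.SHom k x y)) 2)
end

section
/- The degreewise projection Φ : 𝒫_A → P_A, given in degree 1 by the composition of (0, id_{l₁})∗ : E(l, p₁⊕l₁) → E(l, l₁) with the projection E(l,l₁) → C(l,l₁), and in degree 0 by the projection E(l,l₀) → C(l,l₀), is a quasi-isomorphism of complexes of right A-modules; here P_A is the two-term complex C(l,l₁) →φ₁∗→ C(l,l₀) concentrated in homological degrees 1, 0. -/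
namespace Paper

open CategoryTheory Limits

section TwoTerm

universe w

variable {R : Type w} [Ring R]

/-- The terms of the two-term chain complex `⋯ → 0 → M → N`. -/
noncomputable def twoTermX (M N : ModuleCat.{w} R) : ℕ → ModuleCat.{w} R
  | 0 => N
  | 1 => M
  | _ + 2 => ModuleCat.of R PUnit

/-- The differentials of the two-term chain complex `⋯ → 0 → M → N`. -/
noncomputable def twoTermD {M N : ModuleCat.{w} R} (f : M ⟶ N) :
    ∀ n : ℕ, twoTermX M N (n + 1) ⟶ twoTermX M N n
  | 0 => f
  | _ + 1 => 0

lemma twoTermSq {M N : ModuleCat.{w} R} (f : M ⟶ N) :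
    ∀ n : ℕ, twoTermD f (n + 1) ≫ twoTermD f n = 0 :=
  fun _ => Limits.zero_comp

/-- The `ℕ`-indexed chain complex `⋯ → 0 → M → N` (with `M` in homological degree 1 and
`N` in degree 0) associated to a morphism `f : M ⟶ N` of modules. -/
noncomputable def twoTermChain {M N : ModuleCat.{w} R} (f : M ⟶ N) :
    ChainComplex (ModuleCat.{w} R) ℕ :=
  ChainComplex.of (twoTermX M N) (twoTermD f) (twoTermSq f)

/-- The two-term complex of a morphism `f : M ⟶ N`, as a `ℤ`-indexed cochain complex
concentrated in cohomological degrees `-1, 0` (i.e. homological degrees `1, 0`). -/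
noncomputable def twoTermCochainZ {M N : ModuleCat.{w} R} (f : M ⟶ N) :
    CochainComplex (ModuleCat.{w} R) ℤ :=
  ((ComplexShape.embeddingUpIntLE (0 : ℤ)).extendFunctor (ModuleCat.{w} R)).obj
    (twoTermChain f)

end TwoTerm

section Thick

variable {K : Type*} [Category K] [Preadditive K] [HasZeroObject K] [HasShift K ℤ]
  [∀ n : ℤ, (CategoryTheory.shiftFunctor K n).Additive] [Pretriangulated K]

/-- `IsThickMember G X`: `X` belongs to the thick closure of `add G`, i.e. to the
smallest triangulated subcategory of `K` containing `G` and closed under direct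
summands. -/
inductive IsThickMember (G : K) : K → Prop
  | base : IsThickMember G G
  | of_iso {X Y : K} : Nonempty (X ≅ Y) → IsThickMember G X → IsThickMember G Y
  | zero {Z : K} : Limits.IsZero Z → IsThickMember G Z
  | shift {X : K} (n : ℤ) : IsThickMember G X → IsThickMember G (X⟦n⟧)
  | cone {T : Pretriangulated.Triangle K} (hT : T ∈ distTriang K) :
      IsThickMember G T.obj₁ → IsThickMember G T.obj₂ → IsThickMember G T.obj₃
  | summand {X Y : K} (s : Y ⟶ X) (r : X ⟶ Y) :
      s ≫ r = 𝟙 Y → IsThickMember G X → IsThickMember G Y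

end Thick

end Paper

namespace Paper

open CategoryTheory Limits

section TensorFunctorL

variable (A : Type v) [Ring A]
variable (N : Type v) [AddCommGroup N] [Module A N]

/-- The functor `— ⊗_A N : Mod-A ⥤ Ab` (realized with `ℤ`-coefficients),
for a left `A`-module `N`. -/
noncomputable def atensorFunctorL : ModuleCat.{v} Aᵐᵒᵖ ⥤ ModuleCat.{v} ℤ where
  obj M := ModuleCat.of ℤ (ATensor ℤ A M N)
  map {M M'} g := ModuleCat.ofHom (ATensor.mapLeft (N := N) (g.hom.toAddMonoidHom.toIntLinearMap)
    (fun a m => map_smul g.hom (MulOpposite.op a) m))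
  map_id M := by
    apply ModuleCat.hom_ext
    apply ATensor.hom_ext
    intro m n
    rfl
  map_comp {M M' M''} g h := by
    apply ModuleCat.hom_ext
    apply ATensor.hom_ext
    intro m n
    rfl

noncomputable instance : (atensorFunctorL.{v} A N).Additive where
  map_add := by
    intros M M' g h
    apply ModuleCat.hom_ext
    apply ATensor.hom_ext
    intro m n
    show ATensor.mk ℤ A _ N ((g + h).hom m) n =
      ATensor.mk ℤ A _ N (g.hom m) n + ATensor.mk ℤ A _ N (h.hom m) n
    rw [ModuleCat.hom_add, LinearMap.add_apply]
    unfold ATensor.mk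
    rw [map_add, LinearMap.add_apply]

end TensorFunctorL

end Paper

set_option linter.unusedSectionVars false
set_option linter.unusedVariables false

namespace Paper

open CategoryTheory Limits

universe v' u'

variable {E : Type u'} [Category.{v'} E] [Preadditive E] [HasFiniteBiproducts E]
  [HasBinaryBiproducts E]
variable (k : Type) [Field k] [CategoryTheory.Linear k E]
variable (S : Frobenius E)

/-- The projection `E(x',x) → C(x',x)` as a map of right `E(x',x')`-modules. -/
def toSLinOp (x' x : E) : (x' ⟶ x) →ₗ[(End x')ᵐᵒᵖ] S.SHom k x' x where
  toFun f := S.toS k f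
  map_add' f g := map_add (Submodule.mkQ _) _ _
  map_smul' a f := rfl

/-- Postcomposition `C(x,y) → C(x,y')` as a map of right `E(x,x)`-modules. -/
def postSLinOp {x y y' : E} (φ : y ⟶ y') :
    S.SHom k x y →ₗ[(End x)ᵐᵒᵖ] S.SHom k x y' where
  toFun := S.postS k φ
  map_add' u v := map_add _ _ _
  map_smul' a u := by
    obtain ⟨f, rfl⟩ := S.toS_surjective k _ _ u
    show S.toS k ((MulOpposite.unop a ≫ f) ≫ φ) = S.toS k (MulOpposite.unop a ≫ (f ≫ φ))
    rw [Category.assoc]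

section CalP

variable (l : E) {m Ωm p₁ p₂ p₃ l₁ l₀ : E}

/-- The terms of the complex `𝒫_A`. -/
noncomputable def calPX (p₁ p₂ p₃ l₁ l₀ : E) : ℕ → ModuleCat.{v'} ((End l)ᵐᵒᵖ)
  | 0 => ModuleCat.of _ (l ⟶ l₀)
  | 1 => ModuleCat.of _ (l ⟶ p₁ ⊞ l₁)
  | 2 => ModuleCat.of _ (l ⟶ p₂)
  | 3 => ModuleCat.of _ (l ⟶ l₀ ⊞ p₃)
  | 4 => ModuleCat.of _ (l ⟶ l₁)
  | _ + 5 => ModuleCat.of _ PUnit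

/-- The differentials of the complex `𝒫_A`. -/
noncomputable def calPd
    (g : Ωm ⟶ p₁) (g' : m ⊞ p₃ ⟶ p₂) (f' : p₂ ⟶ Ωm)
    (φ₁ : l₁ ⟶ l₀) (φ₀ : l₀ ⟶ m) (γ₁ : Ωm ⟶ l₁) (γ₀ : p₁ ⟶ l₀) :
    ∀ n : ℕ, calPX l p₁ p₂ p₃ l₁ l₀ (n + 1) ⟶ calPX l p₁ p₂ p₃ l₁ l₀ n
  | 0 => ModuleCat.ofHom (postcompL (biprod.desc (-γ₀) φ₁))
  | 1 => ModuleCat.ofHom (postcompL (biprod.lift (f' ≫ g) (f' ≫ γ₁)))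
  | 2 => ModuleCat.ofHom (postcompL (biprod.map φ₀ (𝟙 p₃) ≫ g'))
  | 3 => ModuleCat.ofHom (postcompL (biprod.lift φ₁ 0))
  | _ + 4 => 0

lemma calPsq
    (g : Ωm ⟶ p₁) (f : p₁ ⟶ m) (g' : m ⊞ p₃ ⟶ p₂) (f' : p₂ ⟶ Ωm)
    (φ₁ : l₁ ⟶ l₀) (φ₀ : l₀ ⟶ m) (γ₁ : Ωm ⟶ l₁) (γ₀ : p₁ ⟶ l₀)
    (h2 : g' ≫ f' = 0) (hφ : φ₁ ≫ φ₀ = 0) (hpo : g ≫ γ₀ = γ₁ ≫ φ₁) :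
    ∀ n : ℕ, calPd l g g' f' φ₁ φ₀ γ₁ γ₀ (n + 1) ≫ calPd l g g' f' φ₁ φ₀ γ₁ γ₀ n = 0
  | 0 => by
      ext u
      change (l ⟶ p₂) at u
      show (u ≫ biprod.lift (f' ≫ g) (f' ≫ γ₁)) ≫ biprod.desc (-γ₀) φ₁
        = (0 : calPX l p₁ p₂ p₃ l₁ l₀ 2 ⟶ calPX l p₁ p₂ p₃ l₁ l₀ 0).hom u
      have e : (u ≫ biprod.lift (f' ≫ g) (f' ≫ γ₁)) ≫ biprod.desc (-γ₀) φ₁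
          = u ≫ (f' ≫ (-(g ≫ γ₀) + γ₁ ≫ φ₁)) := by
        simp [biprod.lift_desc, Preadditive.comp_add, Preadditive.comp_neg,
          Category.assoc]
      rw [e, hpo]
      simp
      rfl
  | 1 => by
      have key : g' ≫ biprod.lift (f' ≫ g) (f' ≫ γ₁) = 0 := by
        apply biprod.hom_ext
        · simp only [Category.assoc, biprod.lift_fst, Limits.zero_comp]
          rw [← Category.assoc, h2, Limits.zero_comp]
        · simp only [Category.assoc, biprod.lift_snd, Limits.zero_comp]
          rw [← Category.assoc, h2, Limits.zero_comp]
      ext u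
      change (l ⟶ l₀ ⊞ p₃) at u
      show (u ≫ (biprod.map φ₀ (𝟙 p₃) ≫ g')) ≫ biprod.lift (f' ≫ g) (f' ≫ γ₁)
        = (0 : calPX l p₁ p₂ p₃ l₁ l₀ 3 ⟶ calPX l p₁ p₂ p₃ l₁ l₀ 1).hom u
      have e : (u ≫ (biprod.map φ₀ (𝟙 p₃) ≫ g')) ≫ biprod.lift (f' ≫ g) (f' ≫ γ₁)
          = u ≫ biprod.map φ₀ (𝟙 p₃) ≫ (g' ≫ biprod.lift (f' ≫ g) (f' ≫ γ₁)) := by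
        simp only [Category.assoc]
      rw [e, key, Limits.comp_zero, Limits.comp_zero]
      rfl
  | 2 => by
      have key : biprod.lift φ₁ (0 : l₁ ⟶ p₃) ≫ biprod.map φ₀ (𝟙 p₃) = 0 := by
        apply biprod.hom_ext
        · simp only [Category.assoc, biprod.map_fst, Limits.zero_comp]
          rw [← Category.assoc, biprod.lift_fst, hφ]
        · simp only [Category.assoc, biprod.map_snd, Limits.zero_comp]
          rw [← Category.assoc, biprod.lift_snd, Limits.zero_comp]
      ext u
      change (l ⟶ l₁) at u
      show (u ≫ biprod.lift φ₁ 0) ≫ (biprod.map φ₀ (𝟙 p₃) ≫ g')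
        = (0 : calPX l p₁ p₂ p₃ l₁ l₀ 4 ⟶ calPX l p₁ p₂ p₃ l₁ l₀ 2).hom u
      have e : (u ≫ biprod.lift φ₁ 0) ≫ (biprod.map φ₀ (𝟙 p₃) ≫ g')
          = u ≫ (biprod.lift φ₁ 0 ≫ biprod.map φ₀ (𝟙 p₃)) ≫ g' := by
        simp only [Category.assoc]
      rw [e, key, Limits.zero_comp, Limits.comp_zero]
      rfl
  | _ + 3 => Limits.zero_comp

/-- The complex `𝒫_A` of projective right `A = E(l,l)`-modules
`0 → E(l,l₁) →(φ₁,0)ᵀ∗→ E(l, l₀⊞p₃) →ψ∗→ E(l,p₂) →(gf',γ₁f')ᵀ∗→ E(l, p₁⊞l₁)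
→(−γ₀,φ₁)∗→ E(l,l₀)` (homological degrees 4, 3, 2, 1, 0), where
`ψ = diag(φ₀, id) ≫ g'`. -/
noncomputable def calPComplex
    (g : Ωm ⟶ p₁) (f : p₁ ⟶ m) (g' : m ⊞ p₃ ⟶ p₂) (f' : p₂ ⟶ Ωm)
    (φ₁ : l₁ ⟶ l₀) (φ₀ : l₀ ⟶ m) (γ₁ : Ωm ⟶ l₁) (γ₀ : p₁ ⟶ l₀)
    (h2 : g' ≫ f' = 0) (hφ : φ₁ ≫ φ₀ = 0) (hpo : g ≫ γ₀ = γ₁ ≫ φ₁) :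
    ChainComplex (ModuleCat.{v'} ((End l)ᵐᵒᵖ)) ℕ :=
  ChainComplex.of (calPX l p₁ p₂ p₃ l₁ l₀) (calPd l g g' f' φ₁ φ₀ γ₁ γ₀)
    (calPsq l g f g' f' φ₁ φ₀ γ₁ γ₀ h2 hφ hpo)

/-- The two-term complex `P_A : C(l,l₁) →φ₁∗→ C(l,l₀)` of right `A = E(l,l)`-modules
(homological degrees 1, 0). -/
noncomputable def PAcomplex (φ₁ : l₁ ⟶ l₀) :
    ChainComplex (ModuleCat.{v'} ((End l)ᵐᵒᵖ)) ℕ :=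
  twoTermChain
    (M := ModuleCat.of ((End l)ᵐᵒᵖ) (S.SHom k l l₁))
    (N := ModuleCat.of ((End l)ᵐᵒᵖ) (S.SHom k l l₀))
    (ModuleCat.ofHom (postSLinOp k S φ₁))

/-- The degreewise projection `Φ : 𝒫_A → P_A`: in degree 1 the composition of
`(0, id_{l₁})∗ : E(l, p₁⊞l₁) → E(l,l₁)` with the projection `E(l,l₁) → C(l,l₁)`, in
degree 0 the projection `E(l,l₀) → C(l,l₀)`, and `0` in higher degrees. -/
noncomputable def PhiMap
    (g : Ωm ⟶ p₁) (f : p₁ ⟶ m) (g' : m ⊞ p₃ ⟶ p₂) (f' : p₂ ⟶ Ωm)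
    (φ₁ : l₁ ⟶ l₀) (φ₀ : l₀ ⟶ m) (γ₁ : Ωm ⟶ l₁) (γ₀ : p₁ ⟶ l₀)
    (hp₁ : S.IsProj p₁) (hp₂ : S.IsProj p₂)
    (h2 : g' ≫ f' = 0) (hφ : φ₁ ≫ φ₀ = 0) (hpo : g ≫ γ₀ = γ₁ ≫ φ₁) :
    calPComplex l g f g' f' φ₁ φ₀ γ₁ γ₀ h2 hφ hpo ⟶ PAcomplex k S l φ₁ :=
  ChainComplex.ofHom
    (X := calPComplex l g f g' f' φ₁ φ₀ γ₁ γ₀ h2 hφ hpo) (Y := PAcomplex k S l φ₁)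
    (fun n => match n with
      | 0 => ModuleCat.ofHom (toSLinOp k S l l₀)
      | 1 => ModuleCat.ofHom ((toSLinOp k S l l₁).comp (postcompL (biprod.snd : p₁ ⊞ l₁ ⟶ l₁)))
      | _ + 2 => 0)
    (fun n => by
     dsimp only [calPComplex, PAcomplex, twoTermChain]
     rw [ChainComplex.of_d, ChainComplex.of_d]
     exact match n with
      | 0 => by
          ext u
          change (l ⟶ p₁ ⊞ l₁) at u
          show S.toS k ((u ≫ biprod.snd) ≫ φ₁) = S.toS k (u ≫ biprod.desc (-γ₀) φ₁)
          show Submodule.Quotient.mk _ = Submodule.Quotient.mk _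
          rw [Submodule.Quotient.eq]
          have e : (u ≫ biprod.snd) ≫ φ₁ - u ≫ biprod.desc (-γ₀) φ₁
              = (u ≫ biprod.fst) ≫ γ₀ := by
            rw [biprod.desc_eq]
            simp only [Preadditive.comp_add, Preadditive.comp_neg, Category.assoc,
              Preadditive.comp_sub]
            abel
          rw [e]
          exact Submodule.subset_span ⟨p₁, u ≫ biprod.fst, γ₀, hp₁, rfl⟩
      | 1 => by
          ext u
          change (l ⟶ p₂) at u
          show (0 : S.SHom k l l₁)
            = S.toS k ((u ≫ biprod.lift (f' ≫ g) (f' ≫ γ₁)) ≫ biprod.snd)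
          have e : (u ≫ biprod.lift (f' ≫ g) (f' ≫ γ₁)) ≫ biprod.snd
              = u ≫ (f' ≫ γ₁) := by
            simp [biprod.lift_snd, Category.assoc]
          rw [e]
          symm
          show Submodule.Quotient.mk _ = 0
          rw [Submodule.Quotient.mk_eq_zero]
          exact Submodule.subset_span ⟨p₂, u, f' ≫ γ₁, hp₂, rfl⟩
      | n + 2 => by
          ext u
          rfl)

end CalP

end Paper

namespace Paper
open CategoryTheory Limits

universe v2 u2
variable {E : Type u2} [Category.{v2} E] [Preadditive E] [HasFiniteBiproducts E]
  [HasBinaryBiproducts E]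
variable {k : Type} [Field k] [CategoryTheory.Linear k E]
variable {S : Frobenius E}

lemma toS_zero {x y : E} : S.toS k (0 : x ⟶ y) = 0 := rfl

lemma toSC_zero {x y : E} : SC.toSC S k (0 : x ⟶ y) = 0 := rfl

lemma toSC_id (x : E) : SC.toSC S k (𝟙 x) = 𝟙 (SC.of S k x) := rfl

lemma toSC_add {x y : E} (f g : x ⟶ y) :
    SC.toSC S k (f + g) = SC.toSC S k f + SC.toSC S k g := rfl

/-- `toSC` as an additive map. -/
def toSCAddHom (S : Frobenius E) (k : Type) [Field k] [CategoryTheory.Linear k E] (x y : E) :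
    (x ⟶ y) →+ (SC.of S k x ⟶ SC.of S k y) :=
  AddMonoidHom.mk' (SC.toSC S k) toSC_add

lemma toSC_sum {x y : E} {n : ℕ} (fs : Fin n → (x ⟶ y)) :
    SC.toSC S k (∑ i, fs i) = ∑ i, SC.toSC S k (fs i) :=
  map_sum (toSCAddHom S k x y) fs Finset.univ

lemma exists_id_triangle (T : TriData S k) (w : SC S k) :
    ∃ (z₀ : SC S k) (h₀ : z₀ ⟶ T.susp.obj w), T.dtri (𝟙 w) (0 : w ⟶ z₀) h₀ := by
  obtain ⟨Z, hZ⟩ := (inferInstance : HasZeroObject E)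
  have h12 : (biprod.fst : w.un ⊞ Z ⟶ w.un) ≫ biprod.inl = 𝟙 (w.un ⊞ Z) := by
    apply biprod.hom_ext
    · simp
    · apply hZ.eq_of_tgt
  let e2 : (w.un ⊞ Z) ≅ w.un := ⟨biprod.fst, biprod.inl, h12, by simp⟩
  have hc := S.conf_iso (Iso.refl w.un) e2 (Iso.refl Z) (S.conf_split w.un Z)
  simp only [Iso.refl_inv, Iso.refl_hom, Category.id_comp, Category.comp_id] at hc
  have h1 : (biprod.inl : w.un ⟶ w.un ⊞ Z) ≫ e2.hom = 𝟙 w.un := biprod.inl_fst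
  have h2 : e2.inv ≫ (biprod.snd : w.un ⊞ Z ⟶ Z) = 0 := biprod.inl_snd
  rw [h1, h2] at hc
  obtain ⟨h₀, hd⟩ := T.conf_dtri hc
  exact ⟨SC.of S k Z, h₀, by rwa [toSC_id, toSC_zero] at hd⟩

lemma factor_thru (T : TriData S k) {x y z w : SC S k} {a : x ⟶ y} {b : y ⟶ z}
    {c : z ⟶ T.susp.obj x} (hd : T.dtri a b c) (u : w ⟶ z) (hu : u ≫ c = 0) :
    ∃ v : w ⟶ y, v ≫ b = u := by
  haveI := T.equiv
  obtain ⟨z₀, h₀, hW⟩ := exists_id_triangle T w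
  have hW1 := T.dtri_rot hW
  have hT2 := T.dtri_rot (T.dtri_rot hd)
  obtain ⟨c₀, hc1, hc2⟩ := T.dtri_ext hW1 hT2 u (0 : z₀ ⟶ T.susp.obj x)
    (by simp [hu])
  rw [CategoryTheory.Functor.map_id] at hc2
  have key : T.susp.map u = c₀ ≫ T.susp.map b := by
    have h := hc2
    simp only [Preadditive.neg_comp, Preadditive.comp_neg, Category.id_comp] at h
    exact neg_injective h
  obtain ⟨v, hv⟩ := T.susp.map_surjective c₀
  refine ⟨v, T.susp.map_injective ?_⟩
  rw [CategoryTheory.Functor.map_comp, hv, ← key]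

lemma hom_to_add_zero {w : SC S k} {x y : E} (ha : InAdd x y)
    (hz : ∀ d : w ⟶ SC.of S k x, d = 0) (e : w ⟶ SC.of S k y) : e = 0 := by
  obtain ⟨n, s, t, hst⟩ := ha
  have hid : SC.toSC S k s ≫ SC.toSC S k t = 𝟙 (SC.of S k y) := by
    rw [SC.toSC_comp, hst]; rfl
  have hs : s = ∑ i : Fin n, (s ≫ biproduct.π (fun _ : Fin n => x) i) ≫
      biproduct.ι (fun _ : Fin n => x) i := by
    conv_lhs => rw [← Category.comp_id s, ← biproduct.total]
    rw [Preadditive.comp_sum]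
    simp only [Category.assoc]
  have h0 : e ≫ SC.toSC S k s = 0 := by
    rw [hs, toSC_sum, Preadditive.comp_sum]
    refine Finset.sum_eq_zero fun i _ => ?_
    rw [← SC.toSC_comp, ← Category.assoc, hz (e ≫ SC.toSC S k (s ≫ biproduct.π _ i)),
      Limits.zero_comp]
  calc e = (e ≫ SC.toSC S k s) ≫ SC.toSC S k t := by
        rw [Category.assoc, hid, Category.comp_id]
    _ = 0 := by rw [h0, Limits.zero_comp]

lemma hom_to_susp_add_zero (T : TriData S k) {w : SC S k} {x y : E} (ha : InAdd x y)
    (hz : ∀ d : w ⟶ T.susp.obj (SC.of S k x), d = 0)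
    (q : w ⟶ T.susp.obj (SC.of S k y)) : q = 0 := by
  haveI := T.additive
  obtain ⟨n, s, t, hst⟩ := ha
  have hid : T.susp.map (SC.toSC S k s) ≫ T.susp.map (SC.toSC S k t) = 𝟙 _ := by
    rw [← CategoryTheory.Functor.map_comp, SC.toSC_comp, hst, toSC_id,
      CategoryTheory.Functor.map_id]
  have hs : s = ∑ i : Fin n, (s ≫ biproduct.π (fun _ : Fin n => x) i) ≫
      biproduct.ι (fun _ : Fin n => x) i := by
    conv_lhs => rw [← Category.comp_id s, ← biproduct.total]
    rw [Preadditive.comp_sum]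
    simp only [Category.assoc]
  have h0 : q ≫ T.susp.map (SC.toSC S k s) = 0 := by
    rw [hs, toSC_sum]
    have hms : T.susp.map (∑ i : Fin n, SC.toSC S k ((s ≫ biproduct.π (fun _ : Fin n => x) i)
          ≫ biproduct.ι (fun _ : Fin n => x) i))
        = ∑ i : Fin n, T.susp.map (SC.toSC S k ((s ≫ biproduct.π (fun _ : Fin n => x) i)
          ≫ biproduct.ι (fun _ : Fin n => x) i)) :=
      T.susp.map_sum _ _
    rw [hms, Preadditive.comp_sum]
    refine Finset.sum_eq_zero fun i _ => ?_
    rw [← SC.toSC_comp, CategoryTheory.Functor.map_comp, ← Category.assoc,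
      hz (q ≫ T.susp.map (SC.toSC S k (s ≫ biproduct.π _ i))), Limits.zero_comp]
  calc q = (q ≫ T.susp.map (SC.toSC S k s)) ≫ T.susp.map (SC.toSC S k t) := by
        rw [Category.assoc, hid, Category.comp_id]
    _ = 0 := by rw [h0, Limits.zero_comp]

/-- Any morphism `Σ(l) ⟶ l` vanishes when `l` is rigid with `Σ²l ≅ l`. -/
lemma hom_susp_self_zero (T : TriData S k) {x : E} (hr : T.Rigid (SC.of S k x))
    (hsx : T.SuspSqFix (SC.of S k x)) (d : T.susp.obj (SC.of S k x) ⟶ SC.of S k x) :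
    d = 0 := by
  haveI := T.equiv
  haveI := T.additive
  obtain ⟨ψ⟩ := hsx
  obtain ⟨d', hd'⟩ := T.susp.map_surjective (d ≫ ψ.inv)
  have h0 : d ≫ ψ.inv = 0 := by
    rw [← hd', hr d', CategoryTheory.Functor.map_zero]
  calc d = (d ≫ ψ.inv) ≫ ψ.hom := by rw [Category.assoc, ψ.inv_hom_id, Category.comp_id]
    _ = 0 := by rw [h0, Limits.zero_comp]

section Econf

lemma conf_hom_ext {x y z : E} {i : x ⟶ y} {p : y ⟶ z} (h : S.conf i p)
    {w : E} {u v : w ⟶ x} (huv : u ≫ i = v ≫ i) : u = v := by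
  obtain ⟨hk⟩ := S.conf_isKernel h
  exact Fork.IsLimit.hom_ext hk (by simpa using huv)

lemma conf_ker_lift {x y z : E} {i : x ⟶ y} {p : y ⟶ z} (h : S.conf i p)
    {w : E} (u : w ⟶ y) (hu : u ≫ p = 0) : ∃ v : w ⟶ x, v ≫ i = u := by
  obtain ⟨hk⟩ := S.conf_isKernel h
  obtain ⟨v, hv⟩ := KernelFork.IsLimit.lift' hk u hu
  exact ⟨v, by simpa using hv⟩

lemma mem_projIdeal_of_factor (k : Type) [Field k] [CategoryTheory.Linear k E]
    {x y : E} {P : E} (hP : S.IsProj P) (a : x ⟶ P) (b : P ⟶ y) :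
    a ≫ b ∈ S.projIdeal k x y :=
  Submodule.subset_span ⟨P, a, b, hP, rfl⟩

lemma projIdeal_lift (k : Type) [Field k] [CategoryTheory.Linear k E]
    {x y z y' : E} {p : y ⟶ z} (hp : S.IsDeflation p) (q : y ⟶ y')
    {u : x ⟶ z} (hu : u ∈ S.projIdeal k x z) :
    ∃ w : x ⟶ y, w ≫ p = u ∧ w ≫ q ∈ S.projIdeal k x y' := by
  let V : Submodule k (x ⟶ z) :=
    { carrier := {u | ∃ w : x ⟶ y, w ≫ p = u ∧ w ≫ q ∈ S.projIdeal k x y'}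
      add_mem' := by
        rintro a b ⟨wa, hwa, hwa'⟩ ⟨wb, hwb, hwb'⟩
        exact ⟨wa + wb, by rw [Preadditive.add_comp, hwa, hwb],
          by rw [Preadditive.add_comp]; exact add_mem hwa' hwb'⟩
      zero_mem' := ⟨0, Limits.zero_comp, by rw [Limits.zero_comp]; exact zero_mem _⟩
      smul_mem' := by
        rintro c a ⟨wa, hwa, hwa'⟩
        exact ⟨c • wa, by rw [Linear.smul_comp, hwa],
          by rw [Linear.smul_comp]; exact Submodule.smul_mem _ _ hwa'⟩ }
  have hle : S.projIdeal k x z ≤ V := by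
    rw [Frobenius.projIdeal, Submodule.span_le]
    rintro u ⟨P, a, b, hP, rfl⟩
    obtain ⟨b', hb'⟩ := hP p hp b
    exact ⟨a ≫ b', by rw [Category.assoc, hb'],
      by rw [Category.assoc]; exact mem_projIdeal_of_factor k hP a (b' ≫ q)⟩
  exact hle hu

end Econf


end Paper
namespace Paper
open CategoryTheory Limits

universe v2 u2
variable {E : Type u2} [Category.{v2} E] [Preadditive E] [HasFiniteBiproducts E]
  [HasBinaryBiproducts E]
variable {k : Type} [Field k] [CategoryTheory.Linear k E]
variable {S : Frobenius E}

lemma toS_eq_toS_iff {x y : E} {f g : x ⟶ y} :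
    S.toS k f = S.toS k g ↔ f - g ∈ S.projIdeal k x y :=
  Submodule.Quotient.eq _

lemma toS_eq_zero_iff {x y : E} {f : x ⟶ y} :
    S.toS k f = 0 ↔ f ∈ S.projIdeal k x y :=
  Submodule.Quotient.mk_eq_zero _

section Main

variable {l m Ωm p₁ p₂ p₃ l₁ l₀ : E}
variable {g : Ωm ⟶ p₁} {f : p₁ ⟶ m} {g' : m ⊞ p₃ ⟶ p₂} {f' : p₂ ⟶ Ωm}
variable {φ₁ : l₁ ⟶ l₀} {φ₀ : l₀ ⟶ m} {γ₁ : Ωm ⟶ l₁} {γ₀ : p₁ ⟶ l₀}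

/-- Injectivity of `(φ₁, 0)∗` (exactness of `𝒫_A` in degree 4). -/
lemma exact_deg4 (hconfφ : S.conf φ₁ φ₀) (u : l ⟶ l₁)
    (hu : u ≫ biprod.lift φ₁ (0 : l₁ ⟶ p₃) = 0) : u = 0 := by
  have h1 : u ≫ φ₁ = 0 ≫ φ₁ := by
    have := congrArg (· ≫ (biprod.fst : l₀ ⊞ p₃ ⟶ l₀)) hu
    simpa [Category.assoc, biprod.lift_fst] using this
  exact conf_hom_ext hconfφ h1

/-- Exactness of `𝒫_A` in degree 3. -/
lemma exact_deg3 (hconf₂ : S.conf g' f') (hconfφ : S.conf φ₁ φ₀)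
    (u : l ⟶ l₀ ⊞ p₃) (hu : u ≫ (biprod.map φ₀ (𝟙 p₃) ≫ g') = 0) :
    ∃ v : l ⟶ l₁, v ≫ biprod.lift φ₁ (0 : l₁ ⟶ p₃) = u := by
  have h1 : u ≫ biprod.map φ₀ (𝟙 p₃) = 0 := by
    refine conf_hom_ext hconf₂ ?_
    rw [Category.assoc, hu, Limits.zero_comp]
  have hfst : (u ≫ biprod.fst) ≫ φ₀ = 0 := by
    have := congrArg (· ≫ (biprod.fst : m ⊞ p₃ ⟶ m)) h1
    simpa [Category.assoc, biprod.map_fst] using this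
  have hsnd : u ≫ biprod.snd = 0 := by
    have := congrArg (· ≫ (biprod.snd : m ⊞ p₃ ⟶ p₃)) h1
    simpa [Category.assoc, biprod.map_snd] using this
  obtain ⟨v, hv⟩ := conf_ker_lift hconfφ (u ≫ biprod.fst) hfst
  refine ⟨v, biprod.hom_ext _ _ ?_ ?_⟩
  · rw [Category.assoc, biprod.lift_fst, hv]
  · rw [Category.assoc, biprod.lift_snd, Limits.comp_zero, hsnd]

/-- Exactness of `𝒫_A` in degree 2 (uses the stable category). -/
lemma exact_deg2 (T : TriData S k) (hrl : T.Rigid (SC.of S k l)) (hal₁ : InAdd l l₁)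
    (hconf₁ : S.conf g f) (hconf₂ : S.conf g' f') (hconfφ : S.conf φ₁ φ₀)
    (u : l ⟶ p₂) (hu : u ≫ biprod.lift (f' ≫ g) (f' ≫ γ₁) = 0) :
    ∃ w : l ⟶ l₀ ⊞ p₃, w ≫ (biprod.map φ₀ (𝟙 p₃) ≫ g') = u := by
  have h1 : (u ≫ f') ≫ g = 0 ≫ g := by
    have := congrArg (· ≫ (biprod.fst : p₁ ⊞ l₁ ⟶ p₁)) hu
    simpa [Category.assoc, biprod.lift_fst] using this
  have h2 : u ≫ f' = 0 := conf_hom_ext hconf₁ h1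
  obtain ⟨v, hv⟩ := conf_ker_lift hconf₂ u h2
  obtain ⟨hδ, hdt⟩ := T.conf_dtri hconfφ
  have hvh : SC.toSC S k (v ≫ biprod.fst) ≫ hδ = 0 :=
    hom_to_susp_add_zero T hal₁ hrl _
  obtain ⟨vq, hvq⟩ := factor_thru T hdt (SC.toSC S k (v ≫ biprod.fst)) hvh
  obtain ⟨w₀, hw₀⟩ := S.toS_surjective k l l₀ vq
  have hmem : v ≫ biprod.fst - w₀ ≫ φ₀ ∈ S.projIdeal k l m := by
    rw [← toS_eq_toS_iff (k := k)]
    rw [← hw₀] at hvq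
    exact hvq.symm
  obtain ⟨w', hw', -⟩ := projIdeal_lift k ⟨l₁, φ₁, hconfφ⟩ (0 : l₀ ⟶ l₀) hmem
  refine ⟨biprod.lift (w₀ + w') (v ≫ biprod.snd), ?_⟩
  rw [← Category.assoc]
  have hlift : biprod.lift (w₀ + w') (v ≫ biprod.snd) ≫ biprod.map φ₀ (𝟙 p₃) = v := by
    refine biprod.hom_ext _ _ ?_ ?_
    · rw [Category.assoc, biprod.map_fst, ← Category.assoc, biprod.lift_fst,
        Preadditive.add_comp, hw']
      abel
    · rw [Category.assoc, biprod.map_snd, ← Category.assoc, biprod.lift_snd,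
        Category.comp_id]
  rw [hlift, hv]

/-- Surjectivity input for degree 1. -/
lemma surj_deg1 (hconfpo : S.conf (biprod.lift g γ₁) (biprod.desc (-γ₀) φ₁))
    (v : l ⟶ l₁) (hv : v ≫ φ₁ ∈ S.projIdeal k l l₀) :
    ∃ u : l ⟶ p₁ ⊞ l₁, u ≫ biprod.desc (-γ₀) φ₁ = 0 ∧
      S.toS k (u ≫ biprod.snd) = S.toS k v := by
  obtain ⟨w, hw, hw2⟩ := projIdeal_lift k ⟨Ωm, biprod.lift g γ₁, hconfpo⟩
    (biprod.snd : p₁ ⊞ l₁ ⟶ l₁) hv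
  refine ⟨biprod.lift (-(w ≫ biprod.fst)) (v - w ≫ biprod.snd), ?_, ?_⟩
  · rw [biprod.lift_desc]
    rw [biprod.desc_eq] at hw
    simp only [Preadditive.comp_add, Preadditive.comp_neg, Preadditive.sub_comp,
      Preadditive.neg_comp, Category.assoc] at hw ⊢
    rw [← hw]
    abel
  · rw [biprod.lift_snd, toS_eq_toS_iff]
    simpa using neg_mem hw2

/-- Injectivity input for degree 1 (uses the stable category). -/
lemma inj_deg1 (T : TriData S k) (hrl : T.Rigid (SC.of S k l))
    (hsl : T.SuspSqFix (SC.of S k l)) (hal₀ : InAdd l l₀)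
    (hp₁ : S.IsProj p₁) (hconf₂ : S.conf g' f')
    (hconfpo : S.conf (biprod.lift g γ₁) (biprod.desc (-γ₀) φ₁))
    (u : l ⟶ p₁ ⊞ l₁) (hu0 : u ≫ biprod.desc (-γ₀) φ₁ = 0)
    (husnd : u ≫ biprod.snd ∈ S.projIdeal k l l₁) :
    ∃ t : l ⟶ p₂, t ≫ biprod.lift (f' ≫ g) (f' ≫ γ₁) = u := by
  haveI := T.equiv
  haveI := T.additive
  obtain ⟨s, hs⟩ := conf_ker_lift hconfpo u hu0
  have hsγ : s ≫ γ₁ ∈ S.projIdeal k l l₁ := by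
    have h : s ≫ γ₁ = u ≫ biprod.snd := by
      rw [← hs, Category.assoc, biprod.lift_snd]
    rwa [h]
  have hmem : s ≫ biprod.lift g γ₁ ∈ S.projIdeal k l (p₁ ⊞ l₁) := by
    have h : s ≫ biprod.lift g γ₁ =
        (s ≫ g) ≫ biprod.inl + (s ≫ γ₁) ≫ biprod.inr := by
      rw [biprod.lift_eq, Preadditive.comp_add, Category.assoc, Category.assoc]
    rw [h]
    exact add_mem (mem_projIdeal_of_factor k hp₁ (s ≫ g) biprod.inl)
      (S.rightComp_projIdeal k hsγ biprod.inr)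
  obtain ⟨hδ, hdt⟩ := T.conf_dtri hconfpo
  have hrot := T.dtri_rot hdt
  have hcomp : T.susp.map (SC.toSC S k s) ≫
      (-(T.susp.map (SC.toSC S k (biprod.lift g γ₁)))) = 0 := by
    rw [Preadditive.comp_neg, ← CategoryTheory.Functor.map_comp, SC.toSC_comp]
    have h0 : SC.toSC S k (s ≫ biprod.lift g γ₁) = 0 := toS_eq_zero_iff.2 hmem
    rw [h0, CategoryTheory.Functor.map_zero, neg_zero]
  obtain ⟨vq, hvq⟩ := factor_thru T hrot (T.susp.map (SC.toSC S k s)) hcomp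
  have hv0 : vq = 0 :=
    hom_to_add_zero hal₀ (fun d => hom_susp_self_zero T hrl hsl d) vq
  have hSs : T.susp.map (SC.toSC S k s) = 0 := by
    rw [← hvq, hv0, Limits.zero_comp]
  have hs0 : SC.toSC S k s = 0 := by
    apply T.susp.map_injective
    rw [hSs, CategoryTheory.Functor.map_zero]
  have hsmem : s ∈ S.projIdeal k l Ωm := toS_eq_zero_iff.1 hs0
  obtain ⟨t, ht, -⟩ := projIdeal_lift k ⟨m ⊞ p₃, g', hconf₂⟩ (0 : p₂ ⟶ p₂) hsmem
  refine ⟨t, ?_⟩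
  have hcl : t ≫ biprod.lift (f' ≫ g) (f' ≫ γ₁) = (t ≫ f') ≫ biprod.lift g γ₁ := by
    refine biprod.hom_ext _ _ ?_ ?_
    · rw [Category.assoc, biprod.lift_fst, Category.assoc, biprod.lift_fst, Category.assoc]
    · rw [Category.assoc, biprod.lift_snd, Category.assoc, biprod.lift_snd, Category.assoc]
  rw [hcl, ht, hs]

/-- Injectivity input for degree 0. -/
lemma inj_deg0 (hconfpo : S.conf (biprod.lift g γ₁) (biprod.desc (-γ₀) φ₁))
    (u : l ⟶ l₀) (v : l ⟶ l₁) (hv : S.toS k (v ≫ φ₁) = S.toS k u) :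
    ∃ w : l ⟶ p₁ ⊞ l₁, w ≫ biprod.desc (-γ₀) φ₁ = u := by
  have hmem : u - v ≫ φ₁ ∈ S.projIdeal k l l₀ := by
    rw [← toS_eq_toS_iff (k := k)]
    exact hv.symm
  obtain ⟨w', hw', -⟩ := projIdeal_lift k ⟨Ωm, biprod.lift g γ₁, hconfpo⟩
    (0 : p₁ ⊞ l₁ ⟶ p₁ ⊞ l₁) hmem
  refine ⟨w' + v ≫ biprod.inr, ?_⟩
  rw [Preadditive.add_comp, hw', Category.assoc, biprod.inr_desc]
  abel

end Main
end Paper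

set_option maxHeartbeats 1000000 in
open CategoryTheory Limits Paper in
/-- **Statement 14** (Lemma 3.6).
In the setting of the paper (see Statement 13), the degreewise projection
`Φ : 𝒫_A → P_A` — in degree 1 the composition of `(0, id_{l₁})∗` with the projection
`E(l,l₁) → C(l,l₁)`, in degree 0 the projection `E(l,l₀) → C(l,l₀)` — is a
quasi-isomorphism of complexes of right `A = E(l,l)`-modules, where `P_A` is the
two-term complex `C(l,l₁) →φ₁∗→ C(l,l₀)` in homological degrees 1, 0. -/
theorem statement_14
    (k : Type) [Field k] [IsAlgClosed k]
    (E : Type u) [Category.{v} E] [Preadditive E] [HasFiniteBiproducts E]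
    [HasBinaryBiproducts E] [CategoryTheory.Linear k E]
    (S : Frobenius E) (T : TriData S k)
    (l m : E)
    (hlg : S.Good l) (hmg : S.Good m)
    (hl : T.MaxRigid (SC.of S k l)) (hm : T.MaxRigid (SC.of S k m))
    (hsl : T.SuspSqFix (SC.of S k l)) (hsm : T.SuspSqFix (SC.of S k m))
    (Ωm p₁ p₂ p₃ : E)
    (hp₁ : S.IsProj p₁) (hp₂ : S.IsProj p₂) (hp₃ : S.IsProj p₃)
    (g : Ωm ⟶ p₁) (f : p₁ ⟶ m) (g' : m ⊞ p₃ ⟶ p₂) (f' : p₂ ⟶ Ωm)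
    (hconf₁ : S.conf g f) (hconf₂ : S.conf g' f')
    (l₁ l₀ : E) (hal₁ : InAdd l l₁) (hal₀ : InAdd l l₀)
    (φ₁ : l₁ ⟶ l₀) (φ₀ : l₀ ⟶ m) (hconfφ : S.conf φ₁ φ₀)
    (γ₁ : Ωm ⟶ l₁) (γ₀ : p₁ ⟶ l₀)
    (hpo : g ≫ γ₀ = γ₁ ≫ φ₁) (hpo' : γ₀ ≫ φ₀ = f)
    (hconfpo : S.conf (biprod.lift g γ₁) (biprod.desc (-γ₀) φ₁)) :
    QuasiIso
      (PhiMap k S l g f g' f' φ₁ φ₀ γ₁ γ₀ hp₁ hp₂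
        (S.conf_comp hconf₂) (S.conf_comp hconfφ) hpo) := by
  classical
  set Kc := calPComplex l g f g' f' φ₁ φ₀ γ₁ γ₀
    (S.conf_comp hconf₂) (S.conf_comp hconfφ) hpo with hKc
  set Lc := PAcomplex k S l φ₁ with hLc
  set Φ := PhiMap k S l g f g' f' φ₁ φ₀ γ₁ γ₀ hp₁ hp₂
    (S.conf_comp hconf₂) (S.conf_comp hconfφ) hpo with hΦ
  -- differentials
  have hd10 : Kc.d 1 0 = calPd l g g' f' φ₁ φ₀ γ₁ γ₀ 0 := ChainComplex.of_d (calPX l p₁ p₂ p₃ l₁ l₀) (calPd l g g' f' φ₁ φ₀ γ₁ γ₀) 0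
  have hd21 : Kc.d 2 1 = calPd l g g' f' φ₁ φ₀ γ₁ γ₀ 1 := ChainComplex.of_d (calPX l p₁ p₂ p₃ l₁ l₀) (calPd l g g' f' φ₁ φ₀ γ₁ γ₀) 1
  have hd32 : Kc.d 3 2 = calPd l g g' f' φ₁ φ₀ γ₁ γ₀ 2 := ChainComplex.of_d (calPX l p₁ p₂ p₃ l₁ l₀) (calPd l g g' f' φ₁ φ₀ γ₁ γ₀) 2
  have hd43 : Kc.d 4 3 = calPd l g g' f' φ₁ φ₀ γ₁ γ₀ 3 := ChainComplex.of_d (calPX l p₁ p₂ p₃ l₁ l₀) (calPd l g g' f' φ₁ φ₀ γ₁ γ₀) 3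
  have hd54 : Kc.d 5 4 = calPd l g g' f' φ₁ φ₀ γ₁ γ₀ 4 := ChainComplex.of_d (calPX l p₁ p₂ p₃ l₁ l₀) (calPd l g g' f' φ₁ φ₀ γ₁ γ₀) 4
  have hLd10 : Lc.d 1 0 = twoTermD
      (M := ModuleCat.of ((End l)ᵐᵒᵖ) (S.SHom k l l₁))
      (N := ModuleCat.of ((End l)ᵐᵒᵖ) (S.SHom k l l₀)) (ModuleCat.ofHom (postSLinOp k S φ₁)) 0 :=
    ChainComplex.of_d
      (twoTermX (ModuleCat.of ((End l)ᵐᵒᵖ) (S.SHom k l l₁))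
        (ModuleCat.of ((End l)ᵐᵒᵖ) (S.SHom k l l₀)))
      (twoTermD (ModuleCat.ofHom (postSLinOp k S φ₁))) 0
  have hLd21 : Lc.d 2 1 = twoTermD
      (M := ModuleCat.of ((End l)ᵐᵒᵖ) (S.SHom k l l₁))
      (N := ModuleCat.of ((End l)ᵐᵒᵖ) (S.SHom k l l₀)) (ModuleCat.ofHom (postSLinOp k S φ₁)) 1 :=
    ChainComplex.of_d
      (twoTermX (ModuleCat.of ((End l)ᵐᵒᵖ) (S.SHom k l l₁))
        (ModuleCat.of ((End l)ᵐᵒᵖ) (S.SHom k l l₀)))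
      (twoTermD (ModuleCat.ofHom (postSLinOp k S φ₁))) 1
  -- exactness of the target in degrees ≥ 2
  have hLex : ∀ n : ℕ, Lc.ExactAt (n + 2) := by
    intro n
    rw [HomologicalComplex.exactAt_iff]
    exact ShortComplex.exact_of_isZero_X₂ _
      (ModuleCat.isZero_of_subsingleton (ModuleCat.of ((End l)ᵐᵒᵖ) PUnit))
  refine ⟨fun i => ?_⟩
  rcases i with _ | _ | _ | _ | _ | n
  -- degree 0
  · have hdiff : ∀ t : l ⟶ p₁ ⊞ l₁,
        S.toS k ((t ≫ biprod.snd) ≫ φ₁) = S.toS k (t ≫ biprod.desc (-γ₀) φ₁) := by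
      intro t
      rw [toS_eq_toS_iff]
      have hexp : (t ≫ biprod.snd) ≫ φ₁ - t ≫ biprod.desc (-γ₀) φ₁
          = (t ≫ biprod.fst) ≫ γ₀ := by
        simp only [biprod.desc_eq, Preadditive.comp_add, Preadditive.comp_neg,
          ← Category.assoc]
        abel
      rw [hexp]
      exact mem_projIdeal_of_factor k hp₁ (t ≫ biprod.fst) γ₀
    refine (quasiIsoAt_iff' Φ 1 0 0 (by simp) (by simp)).2 ?_
    rw [ShortComplex.quasiIso_iff]
    have hker : ∀ x ∈ LinearMap.ker (Kc.sc' 1 0 0).g.hom,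
        (show (Kc.sc' 1 0 0).X₂ ⟶ (Lc.sc' 1 0 0).X₂ from Φ.f 0).hom x ∈ LinearMap.ker (Lc.sc' 1 0 0).g.hom := by
      intro x _
      exact LinearMap.mem_ker (f := (Lc.sc' 1 0 0).g.hom).mpr rfl
    have hcomap : LinearMap.range (Kc.sc' 1 0 0).moduleCatToCycles ≤
        Submodule.comap (LinearMap.restrict (show (Kc.sc' 1 0 0).X₂ ⟶ (Lc.sc' 1 0 0).X₂ from Φ.f 0).hom hker)
          (LinearMap.range (Lc.sc' 1 0 0).moduleCatToCycles) := by
      rintro x ⟨t, rfl⟩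
      refine Submodule.mem_comap.2 ⟨S.toS k (t ≫ biprod.snd), Subtype.ext ?_⟩
      show S.toS k ((t ≫ biprod.snd) ≫ φ₁) = S.toS k (t ≫ biprod.desc (-γ₀) φ₁)
      exact hdiff t
    let γdata : ShortComplex.LeftHomologyMapData
        ((HomologicalComplex.shortComplexFunctor' (ModuleCat ((End l)ᵐᵒᵖ))
          (ComplexShape.down ℕ) 1 0 0).map Φ)
        (ShortComplex.moduleCatLeftHomologyData (Kc.sc' 1 0 0))
        (ShortComplex.moduleCatLeftHomologyData (Lc.sc' 1 0 0)) :=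
      { φK := ModuleCat.ofHom (LinearMap.restrict (show (Kc.sc' 1 0 0).X₂ ⟶ (Lc.sc' 1 0 0).X₂ from Φ.f 0).hom hker)
        φH := ModuleCat.ofHom (Submodule.mapQ _ _ (LinearMap.restrict (show (Kc.sc' 1 0 0).X₂ ⟶ (Lc.sc' 1 0 0).X₂ from Φ.f 0).hom hker) hcomap)
        commi := by ext x; rfl
        commf' := by
          ext t
          apply Subtype.ext
          show S.toS k (t ≫ biprod.desc (-γ₀) φ₁)
              = S.toS k ((t ≫ biprod.snd) ≫ φ₁)
          exact (hdiff t).symm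
        commπ := by ext x; rfl }
    rw [γdata.homologyMap_eq]
    have hbij : Function.Bijective
        (Submodule.mapQ _ _ (LinearMap.restrict (show (Kc.sc' 1 0 0).X₂ ⟶ (Lc.sc' 1 0 0).X₂ from Φ.f 0).hom hker) hcomap) := by
      constructor
      · rw [injective_iff_map_eq_zero]
        intro a ha
        obtain ⟨x, rfl⟩ := Submodule.Quotient.mk_surjective _ a
        rw [Submodule.mapQ_apply, Submodule.Quotient.mk_eq_zero] at ha
        obtain ⟨t₂, ht₂⟩ := ha
        obtain ⟨v, hv⟩ := S.toS_surjective k l l₁ t₂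
        have hval : S.toS k (v ≫ φ₁) = S.toS k x.val := by
          have h := congrArg Subtype.val ht₂
          have h2 : ((Lc.sc' 1 0 0).moduleCatToCycles t₂).val
              = S.postS k φ₁ t₂ := rfl
          rw [h2, ← hv, Frobenius.postS_toS] at h
          exact h
        obtain ⟨w, hw⟩ := inj_deg0 hconfpo x.val v hval
        rw [Submodule.Quotient.mk_eq_zero]
        refine ⟨w, Subtype.ext ?_⟩
        show w ≫ biprod.desc (-γ₀) φ₁ = x.val
        exact hw
      · intro b
        obtain ⟨y, rfl⟩ := Submodule.Quotient.mk_surjective _ b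
        obtain ⟨w, hw⟩ := S.toS_surjective k l l₀ y.val
        have hmem : w ∈ LinearMap.ker (Kc.sc' 1 0 0).g.hom := LinearMap.mem_ker (f := (Kc.sc' 1 0 0).g.hom).mpr rfl
        refine ⟨Submodule.Quotient.mk ⟨w, hmem⟩, ?_⟩
        rw [Submodule.mapQ_apply]
        congr 1
        exact Subtype.ext hw
    have hIso : IsIso γdata.φH := by
      let e := LinearEquiv.ofBijective
        (Submodule.mapQ _ _ (LinearMap.restrict (show (Kc.sc' 1 0 0).X₂ ⟶ (Lc.sc' 1 0 0).X₂ from Φ.f 0).hom hker) hcomap) hbij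
      exact ⟨ModuleCat.ofHom e.symm.toLinearMap, by ext z; exact e.symm_apply_apply z,
        by ext z; exact e.apply_symm_apply z⟩
    infer_instance
  -- degree 1
  · have hdiff : ∀ t : l ⟶ p₁ ⊞ l₁,
        S.toS k ((t ≫ biprod.snd) ≫ φ₁) = S.toS k (t ≫ biprod.desc (-γ₀) φ₁) := by
      intro t
      rw [toS_eq_toS_iff]
      have hexp : (t ≫ biprod.snd) ≫ φ₁ - t ≫ biprod.desc (-γ₀) φ₁
          = (t ≫ biprod.fst) ≫ γ₀ := by
        simp only [biprod.desc_eq, Preadditive.comp_add, Preadditive.comp_neg,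
          ← Category.assoc]
        abel
      rw [hexp]
      exact mem_projIdeal_of_factor k hp₁ (t ≫ biprod.fst) γ₀
    have hzero2 : ∀ t : l ⟶ p₂,
        S.toS k ((t ≫ biprod.lift (f' ≫ g) (f' ≫ γ₁)) ≫ biprod.snd) = 0 := by
      intro t
      rw [Category.assoc, biprod.lift_snd, toS_eq_zero_iff]
      exact mem_projIdeal_of_factor k hp₂ t (f' ≫ γ₁)
    refine (quasiIsoAt_iff' Φ 2 1 0 (by simp) (by simp)).2 ?_
    rw [ShortComplex.quasiIso_iff]
    have hker : ∀ x ∈ LinearMap.ker (Kc.sc' 2 1 0).g.hom,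
        (show (Kc.sc' 2 1 0).X₂ ⟶ (Lc.sc' 2 1 0).X₂ from Φ.f 1).hom x ∈ LinearMap.ker (Lc.sc' 2 1 0).g.hom := by
      intro x hx
      have hx' : x ≫ biprod.desc (-γ₀) φ₁ = 0 := LinearMap.mem_ker.mp hx
      refine LinearMap.mem_ker.mpr ?_
      show S.toS k ((x ≫ biprod.snd) ≫ φ₁) = 0
      rw [hdiff x, hx']
      exact toS_zero
    have hcomap : LinearMap.range (Kc.sc' 2 1 0).moduleCatToCycles ≤
        Submodule.comap (LinearMap.restrict (show (Kc.sc' 2 1 0).X₂ ⟶ (Lc.sc' 2 1 0).X₂ from Φ.f 1).hom hker)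
          (LinearMap.range (Lc.sc' 2 1 0).moduleCatToCycles) := by
      rintro x ⟨t, rfl⟩
      refine Submodule.mem_comap.2 ⟨0, Subtype.ext ?_⟩
      show (0 : S.SHom k l l₁)
          = S.toS k ((t ≫ biprod.lift (f' ≫ g) (f' ≫ γ₁)) ≫ biprod.snd)
      exact (hzero2 t).symm
    let γdata : ShortComplex.LeftHomologyMapData
        ((HomologicalComplex.shortComplexFunctor' (ModuleCat ((End l)ᵐᵒᵖ))
          (ComplexShape.down ℕ) 2 1 0).map Φ)
        (ShortComplex.moduleCatLeftHomologyData (Kc.sc' 2 1 0))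
        (ShortComplex.moduleCatLeftHomologyData (Lc.sc' 2 1 0)) :=
      { φK := ModuleCat.ofHom (LinearMap.restrict (show (Kc.sc' 2 1 0).X₂ ⟶ (Lc.sc' 2 1 0).X₂ from Φ.f 1).hom hker)
        φH := ModuleCat.ofHom (Submodule.mapQ _ _ (LinearMap.restrict (show (Kc.sc' 2 1 0).X₂ ⟶ (Lc.sc' 2 1 0).X₂ from Φ.f 1).hom hker) hcomap)
        commi := by ext x; rfl
        commf' := by
          ext t
          apply Subtype.ext
          show S.toS k ((t ≫ biprod.lift (f' ≫ g) (f' ≫ γ₁)) ≫ biprod.snd)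
              = (0 : S.SHom k l l₁)
          exact hzero2 t
        commπ := by ext x; rfl }
    rw [γdata.homologyMap_eq]
    have hbij : Function.Bijective
        (Submodule.mapQ _ _ (LinearMap.restrict (show (Kc.sc' 2 1 0).X₂ ⟶ (Lc.sc' 2 1 0).X₂ from Φ.f 1).hom hker) hcomap) := by
      constructor
      · rw [injective_iff_map_eq_zero]
        intro a ha
        obtain ⟨x, rfl⟩ := Submodule.Quotient.mk_surjective _ a
        rw [Submodule.mapQ_apply, Submodule.Quotient.mk_eq_zero] at ha
        obtain ⟨t, ht⟩ := ha
        have hval : S.toS k (x.val ≫ biprod.snd) = 0 := by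
          have h := congrArg Subtype.val ht
          have h2 : ((Lc.sc' 2 1 0).moduleCatToCycles t).val = 0 := rfl
          rw [h2] at h
          exact h.symm
        have hx0 : x.val ≫ biprod.desc (-γ₀) φ₁ = 0 := LinearMap.mem_ker.mp x.2
        obtain ⟨t', ht'⟩ := inj_deg1 T hl.1 hsl hal₀ hp₁ hconf₂ hconfpo x.val hx0
          (toS_eq_zero_iff.1 hval)
        rw [Submodule.Quotient.mk_eq_zero]
        refine ⟨t', Subtype.ext ?_⟩
        show t' ≫ biprod.lift (f' ≫ g) (f' ≫ γ₁) = x.val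
        exact ht'
      · intro b
        obtain ⟨y, rfl⟩ := Submodule.Quotient.mk_surjective _ b
        obtain ⟨v, hv⟩ := S.toS_surjective k l l₁ y.val
        have hvmem : v ≫ φ₁ ∈ S.projIdeal k l l₀ := by
          have h0 : (Lc.sc' 2 1 0).g.hom y.val = 0 := LinearMap.mem_ker.mp y.2
          have hy : S.postS k φ₁ (S.toS k v) = 0 := by rw [hv]; exact h0
          rw [← toS_eq_zero_iff (k := k), ← Frobenius.postS_toS]
          exact hy
        obtain ⟨u, hu0, husnd⟩ := surj_deg1 hconfpo v hvmem
        have humem : u ∈ LinearMap.ker (Kc.sc' 2 1 0).g.hom := LinearMap.mem_ker (f := (Kc.sc' 2 1 0).g.hom).mpr hu0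
        refine ⟨Submodule.Quotient.mk ⟨u, humem⟩, ?_⟩
        rw [Submodule.mapQ_apply]
        congr 1
        refine Subtype.ext ?_
        show S.toS k (u ≫ biprod.snd) = y.val
        rw [husnd, hv]
    have hIso : IsIso γdata.φH := by
      let e := LinearEquiv.ofBijective
        (Submodule.mapQ _ _ (LinearMap.restrict (show (Kc.sc' 2 1 0).X₂ ⟶ (Lc.sc' 2 1 0).X₂ from Φ.f 1).hom hker) hcomap) hbij
      exact ⟨ModuleCat.ofHom e.symm.toLinearMap, by ext z; exact e.symm_apply_apply z,
        by ext z; exact e.apply_symm_apply z⟩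
    infer_instance
  -- degree 2
  · refine (quasiIsoAt_iff_exactAt' Φ 2 (hLex 0)).2 ?_
    refine (Kc.exactAt_iff' 3 2 1 (by simp) (by simp)).2 ?_
    rw [ShortComplex.moduleCat_exact_iff]
    intro u hu
    have hu' : u ≫ biprod.lift (f' ≫ g) (f' ≫ γ₁) = 0 := by
      have h := hu
      rw [show (Kc.sc' 3 2 1).g = Kc.d 2 1 from rfl, hd21] at h
      exact h
    obtain ⟨w, hw⟩ := exact_deg2 T hl.1 hal₁ hconf₁ hconf₂ hconfφ u hu'
    refine ⟨w, ?_⟩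
    rw [show (Kc.sc' 3 2 1).f = Kc.d 3 2 from rfl, hd32]
    exact hw
  -- degree 3
  · refine (quasiIsoAt_iff_exactAt' Φ 3 (hLex 1)).2 ?_
    refine (Kc.exactAt_iff' 4 3 2 (by simp) (by simp)).2 ?_
    rw [ShortComplex.moduleCat_exact_iff]
    intro u hu
    have hu' : u ≫ (biprod.map φ₀ (𝟙 p₃) ≫ g') = 0 := by
      have h := hu
      rw [show (Kc.sc' 4 3 2).g = Kc.d 3 2 from rfl, hd32] at h
      exact h
    obtain ⟨v, hv⟩ := exact_deg3 hconf₂ hconfφ u hu'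
    refine ⟨v, ?_⟩
    rw [show (Kc.sc' 4 3 2).f = Kc.d 4 3 from rfl, hd43]
    exact hv
  -- degree 4
  · refine (quasiIsoAt_iff_exactAt' Φ 4 (hLex 2)).2 ?_
    refine (Kc.exactAt_iff' 5 4 3 (by simp) (by simp)).2 ?_
    rw [ShortComplex.moduleCat_exact_iff]
    intro u hu
    have hu' : u ≫ biprod.lift φ₁ (0 : l₁ ⟶ p₃) = 0 := by
      have h := hu
      rw [show (Kc.sc' 5 4 3).g = Kc.d 4 3 from rfl, hd43] at h
      exact h
    have hu0 : u = 0 := exact_deg4 hconfφ u hu'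
    refine ⟨0, ?_⟩
    rw [map_zero, hu0]
  -- degrees ≥ 5
  · refine (quasiIsoAt_iff_exactAt' Φ (n + 5) (hLex (n + 3))).2 ?_
    rw [HomologicalComplex.exactAt_iff]
    exact ShortComplex.exact_of_isZero_X₂ _
      (ModuleCat.isZero_of_subsingleton (ModuleCat.of ((End l)ᵐᵒᵖ) PUnit))
end
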